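/- arXiv:2312.07084 — 5 statements merged into one kernel-verified Lean document; each statement's English description precedes it below -/
import Mathlib

section
/- Explicit moment formula for the reflecting weight (Lemma 4.1, identity (ziid0)): for every k ∈ ℕ, E[Z^k · m̄] = (Δ^{k/2}/√(2π)) · ( ∫_{−a}^{∞} z^k e^{−z²/2} dz + ∫_{a}^{∞} (z − 2a)^k e^{−z²/2} dz ). -/
open MeasureTheory ProbabilityTheory Real

open Set
open scoped NNReal ENNReal

lemma aux_int_pow_exp {b : ℝ} (hb : 0 < b) (k : ℕ) :
    Integrable fun x : ℝ => x ^ k * Real.exp (-b * x ^ 2) := by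
  have hk : (-1 : ℝ) < (k : ℝ) :=
    lt_of_lt_of_le (by norm_num) (Nat.cast_nonneg k)
  simpa [Real.rpow_natCast] using integrable_rpow_mul_exp_neg_mul_sq hb hk

lemma aux_int_abs_pow_exp {b : ℝ} (hb : 0 < b) (k : ℕ) :
    Integrable fun x : ℝ => |x| ^ k * Real.exp (-b * x ^ 2) := by
  have := (aux_int_pow_exp hb k).abs
  simpa [abs_mul, abs_pow, Real.abs_exp] using this

lemma aux_gauss_integral (v : ℝ≥0) (hv : v ≠ 0) (f : ℝ → ℝ) :
    ∫ z, f z ∂(gaussianReal 0 v) = ∫ z, gaussianPDFReal 0 v z * f z := by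
  rw [gaussianReal_of_var_ne_zero _ hv]
  have h1 : (gaussianPDF 0 v) = fun x => ((gaussianPDFReal 0 v x).toNNReal : ℝ≥0∞) := by
    ext x; rw [gaussianPDF_def]; rfl
  rw [h1, integral_withDensity_eq_integral_smul
    (by exact (measurable_gaussianPDFReal 0 v).real_toNNReal) f]
  refine integral_congr_ae (Filter.Eventually.of_forall fun z => ?_)
  simp only [NNReal.smul_def, Real.coe_toNNReal _ (gaussianPDFReal_nonneg 0 v z), smul_eq_mul]

lemma aux_gauss_integrable (v : ℝ≥0) (hv : v ≠ 0) (f : ℝ → ℝ) :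
    Integrable f (gaussianReal 0 v) ↔
      Integrable (fun z => gaussianPDFReal 0 v z * f z) volume := by
  rw [gaussianReal_of_var_ne_zero _ hv]
  have h1 : (gaussianPDF 0 v) = fun x => ((gaussianPDFReal 0 v x).toNNReal : ℝ≥0∞) := by
    ext x; rw [gaussianPDF_def]; rfl
  rw [h1, integrable_withDensity_iff_integrable_smul
    ((measurable_gaussianPDFReal 0 v).real_toNNReal)]
  constructor <;> intro h <;> refine h.congr (Filter.Eventually.of_forall fun z => ?_)
  · simp only [NNReal.smul_def, Real.coe_toNNReal _ (gaussianPDFReal_nonneg 0 v z), smul_eq_mul]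
  · simp only [NNReal.smul_def, Real.coe_toNNReal _ (gaussianPDFReal_nonneg 0 v z), smul_eq_mul]

/-- Explicit moment formula for the reflecting weight (Lemma 4.1, identity (ziid0)):
`E[Zᵏ · m̄] = (Δ^{k/2}/√(2π)) (∫_{−a}^∞ zᵏ e^{−z²/2} dz + ∫_a^∞ (z−2a)ᵏ e^{−z²/2} dz)`. -/
theorem stmt_4 (L Δ σ0 x : ℝ) (hΔ : 0 < Δ) (hσ0 : 0 < σ0) (hx : L ≤ x)
    {Ω : Type*} [MeasurableSpace Ω] (μ : Measure Ω) [IsProbabilityMeasure μ]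
    (Z U : Ω → ℝ) (hZm : Measurable Z) (hUm : Measurable U)
    (hZ : μ.map Z = gaussianReal 0 Δ.toNNReal)
    (hU : μ.map U = volume.restrict (Set.Icc (0 : ℝ) 1))
    (hZU : IndepFun Z U μ)
    (X : Ω → ℝ) (hX : ∀ ω, X ω = x + σ0 * Z ω)
    (a : ℝ) (ha : a = (x - L) / (σ0 * Real.sqrt Δ))
    (p : Ω → ℝ)
    (hp : ∀ ω, p ω = Real.exp (-2 * (x - L) * (X ω - L) / (σ0 ^ 2 * Δ)))
    (mbar : Ω → ℝ)
    (hmbar : ∀ ω, mbar ω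
      = (if L < X ω then (1 : ℝ) else 0) * (1 + if U ω ≤ p ω then 1 else 0))
    (k : ℕ) :
    ∫ ω, Z ω ^ k * mbar ω ∂μ
      = Δ ^ ((k : ℝ) / 2) / Real.sqrt (2 * Real.pi) *
          ((∫ z in Set.Ioi (-a), z ^ k * Real.exp (-z ^ 2 / 2))
            + ∫ z in Set.Ioi a, (z - 2 * a) ^ k * Real.exp (-z ^ 2 / 2)) := by
  have hvne : Δ.toNNReal ≠ 0 := fun h => absurd (Real.toNNReal_eq_zero.mp h) (not_le.mpr hΔ)
  have hcoe : ((Δ.toNNReal : ℝ≥0) : ℝ) = Δ := Real.coe_toNNReal _ hΔ.le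
  set s := Real.sqrt Δ with hs
  have hsp : 0 < s := Real.sqrt_pos.mpr hΔ
  have hs2 : s ^ 2 = Δ := Real.sq_sqrt hΔ.le
  have hxL : x - L = a * (σ0 * s) := by
    rw [ha]; field_simp
  have ha0 : 0 ≤ a := by
    rw [ha]; exact div_nonneg (by linarith) (by positivity)
  set c : ℝ := -(a * s) with hc
  set g : ℝ → ℝ := fun z => Real.exp (-2 * (x - L) * (x + σ0 * z - L) / (σ0 ^ 2 * Δ)) with hg
  set F : ℝ × ℝ → ℝ := fun q =>
    q.1 ^ k * ((if c < q.1 then (1:ℝ) else 0) * (1 + if q.2 ≤ g q.1 then 1 else 0)) with hF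
  have hcz : ∀ z : ℝ, L < x + σ0 * z ↔ c < z := by
    intro z
    have hcs : c = (L - x) / σ0 := by
      rw [hc, ha]; field_simp; ring
    rw [hcs, div_lt_iff₀ hσ0]
    constructor <;> intro h <;> nlinarith
  set ν := gaussianReal 0 Δ.toNNReal with hν
  set π1 := volume.restrict (Set.Icc (0:ℝ) 1) with hπ1
  haveI : IsProbabilityMeasure π1 := ⟨by
    rw [hπ1, Measure.restrict_apply_univ, Real.volume_Icc]; norm_num⟩
  have hgm : Measurable g := by fun_prop
  have hFm : Measurable F := by
    apply Measurable.mul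
    · exact measurable_fst.pow_const k
    apply Measurable.mul
    · exact Measurable.ite (measurableSet_lt measurable_const measurable_fst)
        measurable_const measurable_const
    · exact measurable_const.add (Measurable.ite
        (measurableSet_le measurable_snd (hgm.comp measurable_fst))
        measurable_const measurable_const)
  have hjoint : μ.map (fun ω => (Z ω, U ω)) = ν.prod π1 := by
    rw [← hZ, ← hU]
    exact (indepFun_iff_map_prod_eq_prod_map_map hZm.aemeasurable hUm.aemeasurable).mp hZU
  -- integrability of F on the product
  have hZk : Integrable (fun z : ℝ => z ^ k) ν := by
    rw [hν, aux_gauss_integrable _ hvne]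
    have hb : (0:ℝ) < (2*Δ)⁻¹ := by positivity
    have h0 := (aux_int_pow_exp hb k).const_mul ((Real.sqrt (2*π*Δ))⁻¹)
    refine h0.congr (Filter.Eventually.of_forall fun z => ?_)
    simp only [gaussianPDFReal, hcoe, sub_zero]
    rw [show -(2*Δ)⁻¹ * z^2 = -z^2/(2*Δ) by ring]
    ring
  have hfst : Integrable (fun q : ℝ × ℝ => q.1 ^ k) (ν.prod π1) := by
    have hmap : (ν.prod π1).map Prod.fst = ν := by
      rw [Measure.map_fst_prod]; simp
    have := (integrable_map_measure (f := (Prod.fst : ℝ × ℝ → ℝ))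
      (g := fun z : ℝ => z ^ k)
      (by rw [hmap]; exact hZk.aestronglyMeasurable)
      measurable_fst.aemeasurable)
    rw [hmap] at this
    exact (this.mp hZk).congr (Filter.Eventually.of_forall fun q => rfl)
  have hFi : Integrable F (ν.prod π1) := by
    refine Integrable.mono' (hfst.abs.mul_const 2) hFm.aestronglyMeasurable
      (Filter.Eventually.of_forall fun q => ?_)
    have hG : |((if c < q.1 then (1:ℝ) else 0) * (1 + if q.2 ≤ g q.1 then 1 else 0))| ≤ 2 := by
      split_ifs <;> norm_num
    have h1 : ‖F q‖ = |q.1 ^ k| *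
        |((if c < q.1 then (1:ℝ) else 0) * (1 + if q.2 ≤ g q.1 then 1 else 0))| := by
      rw [Real.norm_eq_abs]
      exact abs_mul _ _
    rw [h1]
    exact mul_le_mul_of_nonneg_left hG (abs_nonneg _)
  -- the inner integral
  have hinner : ∀ z : ℝ, (∫ u, F (z, u) ∂π1)
      = (if c < z then (1:ℝ) else 0) * (z ^ k * (1 + g z)) := by
    intro z
    by_cases hz : c < z
    · have hg0 : 0 < g z := Real.exp_pos _
      have hg1 : g z ≤ 1 := by
        rw [hg]
        refine Real.exp_le_one_iff.mpr ?_
        have h2 : 0 < x + σ0 * z - L := by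
          have := (hcz z).mpr hz; linarith
        apply div_nonpos_of_nonpos_of_nonneg
        · nlinarith [mul_nonneg (sub_nonneg.mpr hx) h2.le]
        · positivity
      have hiteeq : (fun u : ℝ => if u ≤ g z then (1:ℝ) else 0)
          = (Set.Iic (g z)).indicator (fun _ => (1:ℝ)) := by
        funext u; simp [Set.indicator_apply, Set.mem_Iic]
      have hmeas : (π1 (Set.Iic (g z))).toReal = g z := by
        rw [hπ1, Measure.restrict_apply measurableSet_Iic]
        have hset : Set.Iic (g z) ∩ Set.Icc (0:ℝ) 1 = Set.Icc 0 (g z) := by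
          ext u
          simp only [Set.mem_inter_iff, Set.mem_Iic, Set.mem_Icc]
          constructor
          · rintro ⟨h1, h2, h3⟩; exact ⟨h2, h1⟩
          · rintro ⟨h1, h2⟩; exact ⟨h2, h1, h2.trans hg1⟩
        rw [hset, Real.volume_Icc, sub_zero, ENNReal.toReal_ofReal hg0.le]
      have hitint : Integrable (fun u : ℝ => if u ≤ g z then (1:ℝ) else 0) π1 := by
        rw [hiteeq]; exact (integrable_const 1).indicator measurableSet_Iic
      have : (∫ u, F (z, u) ∂π1) = z ^ k * ∫ u, (1 + if u ≤ g z then (1:ℝ) else 0) ∂π1 := by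
        rw [hF]
        simp only [hz, if_true, one_mul]
        rw [integral_const_mul]
      rw [this, integral_add (integrable_const 1) hitint, integral_const, hiteeq,
        integral_indicator_const _ measurableSet_Iic, measureReal_def π1 (Iic (g z)), hmeas]
      simp [hz]
    · rw [hF]
      simp only [hz, if_false, zero_mul, mul_zero, integral_zero]
  -- put everything together
  have hgpdf : ∀ w : ℝ, gaussianPDFReal 0 Δ.toNNReal (s*w)
      = (Real.sqrt (2*π*Δ))⁻¹ * Real.exp (-w^2/2) := by
    intro w
    simp only [gaussianPDFReal, hcoe, sub_zero]
    congr 1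
    rw [mul_pow, hs2]
    field_simp
  have hgsw : ∀ w : ℝ, g (s*w) = Real.exp (-(2*a*(a+w))) := by
    intro w
    show Real.exp (-2 * (x - L) * (x + σ0 * (s*w) - L) / (σ0 ^ 2 * Δ)) = _
    congr 1
    have hxw : x + σ0*(s*w) - L = a*(σ0*s) + σ0*(s*w) := by linarith [hxL]
    rw [hxw, hxL, ← hs2]
    field_simp
  set f0 : ℝ → ℝ := fun z => gaussianPDFReal 0 Δ.toNNReal z * (z ^ k * (1 + g z)) with hf0
  have hpt : ∀ w : ℝ, f0 (s * w)
      = ((Real.sqrt (2*π*Δ))⁻¹ * s^k) *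
        ((w^k * Real.exp (-w^2/2)) + (w + 2*a - 2*a)^k * Real.exp (-(w+2*a)^2/2)) := by
    intro w
    have e3 : Real.exp (-w^2/2) * Real.exp (-(2*a*(a+w))) = Real.exp (-(w+2*a)^2/2) := by
      rw [← Real.exp_add]; congr 1; ring
    show gaussianPDFReal 0 Δ.toNNReal (s*w) * ((s*w) ^ k * (1 + g (s*w))) = _
    rw [hgpdf w, hgsw w, mul_pow, show w + 2*a - 2*a = w by ring, ← e3]
    ring
  -- integrability on Ioi (-a)
  have hAint : Integrable (fun w : ℝ => w^k * Real.exp (-w^2/2)) := by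
    have := aux_int_pow_exp (by norm_num : (0:ℝ) < 1/2) k
    refine this.congr (Filter.Eventually.of_forall fun w => ?_)
    show w^k * Real.exp (-(1/2:ℝ)*w^2) = w^k * Real.exp (-w^2/2)
    rw [show -(1/2:ℝ)*w^2 = -w^2/2 by ring]
  have hAbs : Integrable (fun w : ℝ => |w|^k * Real.exp (-w^2/2)) := by
    have := aux_int_abs_pow_exp (by norm_num : (0:ℝ) < 1/2) k
    refine this.congr (Filter.Eventually.of_forall fun w => ?_)
    show |w|^k * Real.exp (-(1/2:ℝ)*w^2) = |w|^k * Real.exp (-w^2/2)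
    rw [show -(1/2:ℝ)*w^2 = -w^2/2 by ring]
  have hBon : IntegrableOn (fun w : ℝ => (w + 2*a - 2*a)^k * Real.exp (-(w+2*a)^2/2))
      (Set.Ioi (-a)) := by
    refine Integrable.mono' hAbs.integrableOn
      ((((measurable_id.add_const (2*a)).sub_const (2*a)).pow_const k).mul
        (((((measurable_id.add_const (2*a)).pow_const 2).neg).div_const 2).exp)).aestronglyMeasurable ?_
    filter_upwards [ae_restrict_mem measurableSet_Ioi] with w hw
    have hwa : -a < w := hw
    rw [Real.norm_eq_abs, abs_mul, abs_pow, Real.abs_exp, show w + 2*a - 2*a = w by ring]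
    exact mul_le_mul_of_nonneg_left (Real.exp_le_exp.mpr (by nlinarith)) (by positivity)
  have hconst : s * ((Real.sqrt (2*π*Δ))⁻¹ * s^k)
      = Δ ^ ((k : ℝ) / 2) / Real.sqrt (2 * π) := by
    have h2π : Real.sqrt (2*π*Δ) = Real.sqrt (2*π) * s := by
      rw [hs, ← Real.sqrt_mul (by positivity)]
    have hΔk : s^k = Δ ^ ((k : ℝ) / 2) := by
      rw [hs, Real.sqrt_eq_rpow, ← Real.rpow_natCast (Δ ^ ((1:ℝ)/2)) k,
        ← Real.rpow_mul hΔ.le]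
      congr 1
      push_cast
      ring
    rw [h2π, ← hΔk]
    have hsq : Real.sqrt (2*π) ≠ 0 := by positivity
    field_simp
  have htrans : (∫ w in Set.Ioi (-a), (w + 2*a - 2*a)^k * Real.exp (-(w+2*a)^2/2))
      = ∫ z in Set.Ioi a, (z - 2*a)^k * Real.exp (-z^2/2) := by
    rw [← integral_indicator measurableSet_Ioi, ← integral_indicator measurableSet_Ioi]
    have hptw : ∀ w : ℝ, (Set.Ioi (-a)).indicator
          (fun w => (w + 2*a - 2*a)^k * Real.exp (-(w+2*a)^2/2)) w
        = (Set.Ioi a).indicator (fun v => (v - 2*a)^k * Real.exp (-v^2/2)) (w + 2*a) := by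
      intro w
      simp only [Set.indicator_apply, Set.mem_Ioi]
      have hiff : a < w + 2*a ↔ -a < w := by constructor <;> intro <;> linarith
      simp only [hiff]
    rw [show (Set.Ioi (-a)).indicator
          (fun w => (w + 2*a - 2*a)^k * Real.exp (-(w+2*a)^2/2))
        = fun w => (Set.Ioi a).indicator (fun v => (v - 2*a)^k * Real.exp (-v^2/2)) (w + 2*a)
      from funext hptw]
    exact integral_add_right_eq_self _ (2*a)
  calc ∫ ω, Z ω ^ k * mbar ω ∂μ
      = ∫ ω, F (Z ω, U ω) ∂μ := by
        refine integral_congr_ae (Filter.Eventually.of_forall fun ω => ?_)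
        have h1 : (L < X ω) = (c < Z ω) := by rw [hX ω]; exact propext (hcz _)
        have h2 : p ω = g (Z ω) := by rw [hp ω, hX ω]
        show Z ω ^ k * mbar ω = (Z ω) ^ k *
          ((if c < Z ω then (1:ℝ) else 0) * (1 + if U ω ≤ g (Z ω) then 1 else 0))
        simp only [hmbar ω, h1, h2]
    _ = ∫ q, F q ∂(ν.prod π1) := by
        rw [← hjoint, integral_map (hZm.prodMk hUm).aemeasurable hFm.aestronglyMeasurable]
    _ = ∫ z, ∫ u, F (z, u) ∂π1 ∂ν := integral_prod F hFi
    _ = ∫ z, (if c < z then (1:ℝ) else 0) * (z ^ k * (1 + g z)) ∂ν :=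
        integral_congr_ae (Filter.Eventually.of_forall hinner)
    _ = ∫ z, gaussianPDFReal 0 Δ.toNNReal z *
          ((if c < z then (1:ℝ) else 0) * (z ^ k * (1 + g z))) := by
        rw [hν]; exact aux_gauss_integral _ hvne _
    _ = ∫ z in Set.Ioi c, f0 z := by
        rw [← integral_indicator measurableSet_Ioi]
        refine integral_congr_ae (Filter.Eventually.of_forall fun z => ?_)
        rw [hf0]
        simp only [Set.indicator_apply, Set.mem_Ioi]
        by_cases hzc : c < z <;> simp [hzc]
    _ = s • ∫ w in Set.Ioi (-a), f0 (s * w) := by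
        have h := integral_comp_mul_left_Ioi f0 (-a) hsp
        rw [show s * (-a) = c by rw [hc]; ring] at h
        rw [h, smul_smul, mul_inv_cancel₀ hsp.ne', one_smul]
    _ = s • (((Real.sqrt (2*π*Δ))⁻¹ * s^k) *
          ∫ w in Set.Ioi (-a),
            ((w^k * Real.exp (-w^2/2)) + (w + 2*a - 2*a)^k * Real.exp (-(w+2*a)^2/2))) := by
        rw [show (∫ w in Set.Ioi (-a), f0 (s * w))
            = ∫ w in Set.Ioi (-a), ((Real.sqrt (2*π*Δ))⁻¹ * s^k) *
              ((w^k * Real.exp (-w^2/2)) + (w + 2*a - 2*a)^k * Real.exp (-(w+2*a)^2/2))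
          from integral_congr_ae (Filter.Eventually.of_forall fun w => hpt w),
          integral_const_mul]
    _ = Δ ^ ((k : ℝ) / 2) / Real.sqrt (2 * π) *
          ((∫ z in Set.Ioi (-a), z ^ k * Real.exp (-z ^ 2 / 2))
            + ∫ z in Set.Ioi a, (z - 2 * a) ^ k * Real.exp (-z ^ 2 / 2)) := by
        rw [integral_add hAint.integrableOn hBon, htrans, smul_eq_mul, ← mul_assoc, hconst]
end

section
/- First and second moment identities for the reflecting weight (Lemma 4.1, (ziid)): set ϑ = (2π)^{−1/2} e^{−a²/2} − a·Φ̄(a). Then E[Z·m̄] = 2√Δ·ϑ, E[Z²·m̄] = Δ − 4Δ·a·ϑ, and 0 ≤ ϑ ≤ (2π)^{−1/2} e^{−a²/2}. -/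
open MeasureTheory Real Set

-- integrability lemmas
lemma aux_int0 {v : ℝ} (hv : 0 < v) : Integrable (fun z : ℝ => Real.exp (-z^2/(2*v))) := by
  have := integrable_exp_neg_mul_sq (b := 1/(2*v)) (by positivity)
  refine this.congr (Filter.Eventually.of_forall fun z => ?_)
  ring_nf

lemma aux_int1 {v : ℝ} (hv : 0 < v) : Integrable (fun z : ℝ => z * Real.exp (-z^2/(2*v))) := by
  have := integrable_mul_exp_neg_mul_sq (b := 1/(2*v)) (by positivity)
  refine this.congr (Filter.Eventually.of_forall fun z => ?_)
  ring_nf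

lemma aux_int2 {v : ℝ} (hv : 0 < v) : Integrable (fun z : ℝ => z^2 * Real.exp (-z^2/(2*v))) := by
  have hmaj : Integrable (fun z : ℝ => (4*v) * Real.exp (-z^2/(4*v))) :=
    (by simpa [mul_comm, div_eq_mul_inv] using
      (integrable_exp_neg_mul_sq (b := 1/(4*v)) (by positivity)).const_mul (4*v) : _)
  refine hmaj.mono' ?_ (Filter.Eventually.of_forall fun z => ?_)
  · exact (continuous_pow 2).mul ((continuous_id.pow 2).neg.div_const _).rexp |>.aestronglyMeasurable
  · have h1 : z^2/(4*v) ≤ Real.exp (z^2/(4*v)) := (Real.add_one_le_exp _).trans' (by linarith [sq_nonneg z, (by positivity : (0:ℝ) ≤ z^2/(4*v))])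
    have h2 : z^2 ≤ (4*v) * Real.exp (z^2/(4*v)) := by
      rw [div_le_iff₀ (by positivity : (0:ℝ) < 4*v)] at h1; linarith
    have : |z^2 * Real.exp (-z^2/(2*v))| = z^2 * Real.exp (-z^2/(2*v)) :=
      abs_of_nonneg (by positivity)
    rw [Real.norm_eq_abs, this]
    calc z^2 * Real.exp (-z^2/(2*v)) ≤ ((4*v) * Real.exp (z^2/(4*v))) * Real.exp (-z^2/(2*v)) := by
          exact mul_le_mul_of_nonneg_right h2 (Real.exp_nonneg _)
      _ = (4*v) * Real.exp (-z^2/(4*v)) := by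
          rw [mul_assoc, ← Real.exp_add]; ring_nf

lemma aux_tendsto {v : ℝ} (hv : 0 < v) :
    Filter.Tendsto (fun z : ℝ => Real.exp (-z^2/(2*v))) Filter.atTop (nhds 0) := by
  have h : Filter.Tendsto (fun z : ℝ => -z^2/(2*v)) Filter.atTop Filter.atBot := by
    apply Filter.Tendsto.atBot_div_const (by positivity)
    exact Filter.tendsto_neg_atBot_iff.mpr (Filter.tendsto_pow_atTop two_ne_zero)
  simpa [Function.comp_def] using Real.tendsto_exp_atBot.comp h

lemma aux_I1 {v : ℝ} (hv : 0 < v) (b : ℝ) :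
    ∫ z in Ioi b, z * Real.exp (-z^2/(2*v)) = v * Real.exp (-b^2/(2*v)) := by
  have hderiv : ∀ z ∈ Ici b, HasDerivAt (fun z : ℝ => -v * Real.exp (-z^2/(2*v)))
      (z * Real.exp (-z^2/(2*v))) z := by
    intro z _
    have h1 : HasDerivAt (fun z : ℝ => -z^2/(2*v)) (-z/v) z := by
      have := ((hasDerivAt_pow 2 z).neg).div_const (2*v)
      refine this.congr_deriv ?_; field_simp; ring
    have := ((h1.exp).const_mul (-v))
    refine this.congr_deriv ?_
    field_simp
  have := integral_Ioi_of_hasDerivAt_of_tendsto' hderiv ((aux_int1 hv).integrableOn)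
    (by simpa using ((aux_tendsto hv).const_mul (-v)))
  rw [this]; ring

lemma aux_I2 {v : ℝ} (hv : 0 < v) (b : ℝ) :
    ∫ z in Ioi b, z^2 * Real.exp (-z^2/(2*v))
      = v * b * Real.exp (-b^2/(2*v)) + v * ∫ z in Ioi b, Real.exp (-z^2/(2*v)) := by
  have hderiv : ∀ z ∈ Ici b, HasDerivAt (fun z : ℝ => -v * (z * Real.exp (-z^2/(2*v))))
      (z^2 * Real.exp (-z^2/(2*v)) - v * Real.exp (-z^2/(2*v))) z := by
    intro z _
    have h1 : HasDerivAt (fun z : ℝ => -z^2/(2*v)) (-z/v) z := by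
      have := ((hasDerivAt_pow 2 z).neg).div_const (2*v)
      refine this.congr_deriv ?_; field_simp; ring
    have h2 := (hasDerivAt_id z).mul h1.exp
    have := h2.const_mul (-v)
    refine this.congr_deriv ?_
    field_simp
    simp only [id_eq]; ring
  have htt : Filter.Tendsto (fun z : ℝ => -v * (z * Real.exp (-z^2/(2*v)))) Filter.atTop (nhds 0) := by
    have h : Filter.Tendsto (fun z : ℝ => z * Real.exp (-z^2/(2*v))) Filter.atTop (nhds 0) := by
      have hg := tendsto_rpow_mul_exp_neg_mul_atTop_nhds_zero (1/2) (1/(2*v)) (by positivity)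
      have hsq : Filter.Tendsto (fun z : ℝ => z^2) Filter.atTop Filter.atTop :=
        Filter.tendsto_pow_atTop two_ne_zero
      have hc := hg.comp hsq
      have h1 : ∀ᶠ z in Filter.atTop, ((fun x : ℝ => x ^ (1/2 : ℝ) * Real.exp (-(1/(2*v)) * x)) ∘ fun z : ℝ => z^2) z
          = z * Real.exp (-z^2/(2*v)) := by
        filter_upwards [Filter.eventually_ge_atTop (0:ℝ)] with z hz
        simp only [Function.comp_apply]
        rw [← Real.rpow_natCast z 2, ← Real.rpow_mul hz]
        have h2 : ((2:ℕ):ℝ) * (1/2 : ℝ) = 1 := by norm_num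
        rw [h2, Real.rpow_one]
        ring_nf
      exact (Filter.tendsto_congr' h1).mp hc
    simpa using h.const_mul (-v)
  have hint : IntegrableOn (fun z : ℝ => z^2 * Real.exp (-z^2/(2*v)) - v * Real.exp (-z^2/(2*v))) (Ioi b) :=
    ((aux_int2 hv).sub ((aux_int0 hv).const_mul v)).integrableOn
  have := integral_Ioi_of_hasDerivAt_of_tendsto' hderiv hint htt
  rw [integral_sub ((aux_int2 hv).integrableOn) (((aux_int0 hv).const_mul v).integrableOn)] at this
  rw [MeasureTheory.integral_const_mul] at this
  linarith [this]

lemma aux_scale {v : ℝ} (hv : 0 < v) (b : ℝ) :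
    ∫ z in Ioi b, Real.exp (-z^2/(2*v))
      = Real.sqrt v * ∫ t in Ioi (b / Real.sqrt v), Real.exp (-t^2/2) := by
  have hs : 0 < Real.sqrt v := Real.sqrt_pos.mpr hv
  have := integral_comp_mul_left_Ioi (fun z => Real.exp (-z^2/(2*v))) (b / Real.sqrt v) hs
  rw [mul_div_cancel₀ _ hs.ne'] at this
  have heq : ∀ x : ℝ, Real.exp (-(Real.sqrt v * x)^2/(2*v)) = Real.exp (-x^2/2) := by
    intro x
    congr 1
    rw [mul_pow, Real.sq_sqrt hv.le]
    field_simp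
  simp_rw [heq] at this
  rw [this, smul_eq_mul, ← mul_assoc, mul_inv_cancel₀ hs.ne', one_mul]

lemma aux_total : ∫ t : ℝ, Real.exp (-t^2/2) = Real.sqrt (2 * Real.pi) := by
  have := integral_gaussian (1/2)
  rw [show Real.pi / (1/2) = 2 * Real.pi by ring] at this
  rw [← this]
  congr 1 with t
  ring_nf

lemma aux_shift (f : ℝ → ℝ) (b d : ℝ) :
    ∫ z in Ioi b, f (z + d) = ∫ w in Ioi (b + d), f w := by
  have h1 : ∫ z in Ioi b, f (z + d)
      = ∫ z, (Ioi (b + d)).indicator f (z + d) := by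
    rw [← MeasureTheory.integral_indicator measurableSet_Ioi]
    congr 1 with z
    by_cases hz : z ∈ Ioi b
    · rw [Set.indicator_of_mem hz, Set.indicator_of_mem (by simpa using add_lt_add_right hz.out d)]
    · rw [Set.indicator_of_notMem hz, Set.indicator_of_notMem (by simp at hz ⊢; linarith)]
  rw [h1, MeasureTheory.integral_add_right_eq_self, MeasureTheory.integral_indicator measurableSet_Ioi]

lemma aux_sym (c : ℝ) : ∫ t in Iic (-c), Real.exp (-t^2/2) = ∫ t in Ioi c, Real.exp (-t^2/2) := by
  have := integral_comp_neg_Iic (-c) (fun t => Real.exp (-t^2/2))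
  simp only [neg_neg, neg_sq] at this
  rw [← this]

open ProbabilityTheory

lemma aux_prob {Ω : Type*} [MeasurableSpace Ω] (μ : Measure Ω) [IsProbabilityMeasure μ]
    (Z U : Ω → ℝ) (hZm : Measurable Z) (hUm : Measurable U) (v : ℝ) (hv : 0 < v)
    (hZ : μ.map Z = gaussianReal 0 v.toNNReal)
    (hU : μ.map U = volume.restrict (Set.Icc (0:ℝ) 1))
    (hZU : IndepFun Z U μ)
    (A : ℝ) (hA : 0 ≤ A)
    (f : ℝ → ℝ) (hfm : Measurable f)
    (hfi : Integrable (fun z => f z * Real.exp (-z^2/(2*v)))) :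
    ∫ ω, f (Z ω) * ((if -(A * Real.sqrt v) < Z ω then (1:ℝ) else 0)
        * (1 + if U ω ≤ Real.exp (-2*A^2 - 2*A*(Z ω)/Real.sqrt v) then 1 else 0)) ∂μ
      = (Real.sqrt (2*Real.pi*v))⁻¹ *
        ((∫ z in Ioi (-(A*Real.sqrt v)), f z * Real.exp (-z^2/(2*v)))
          + ∫ z in Ioi (-(A*Real.sqrt v)), f z * Real.exp (-(z+2*A*Real.sqrt v)^2/(2*v))) := by
  set s : ℝ := Real.sqrt v with hs_def
  have hs : 0 < s := Real.sqrt_pos.mpr hv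
  have hs2 : s^2 = v := Real.sq_sqrt hv.le
  set q : ℝ → ℝ := fun z => Real.exp (-2*A^2 - 2*A*z/s) with hq_def
  have hqm : Measurable q := by fun_prop
  set g : ℝ × ℝ → ℝ := fun r => f r.1 * ((if -(A * s) < r.1 then (1:ℝ) else 0)
      * (1 + if r.2 ≤ q r.1 then 1 else 0)) with hg_def
  have hgm : Measurable g := by
    apply ((hfm.comp measurable_fst).mul _)
    apply Measurable.mul
    · exact Measurable.ite (measurableSet_lt measurable_const measurable_fst)
        measurable_const measurable_const
    · apply Measurable.add measurable_const
      exact Measurable.ite (measurableSet_le measurable_snd (hqm.comp measurable_fst))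
        measurable_const measurable_const
  set γ : Measure ℝ := gaussianReal 0 v.toNNReal with hγ_def
  set ν : Measure ℝ := volume.restrict (Set.Icc (0:ℝ) 1) with hν_def
  have hν1 : ν Set.univ = 1 := by
    rw [hν_def, Measure.restrict_apply MeasurableSet.univ, Set.univ_inter, Real.volume_Icc]
    norm_num
  have hmap : μ.map (fun ω => (Z ω, U ω)) = γ.prod ν := by
    rw [← hZ, ← hU]
    exact (indepFun_iff_map_prod_eq_prod_map_map hZm.aemeasurable hUm.aemeasurable).mp hZU
  -- pdf facts
  have hvnn : (v.toNNReal : ℝ) = v := Real.coe_toNNReal v hv.le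
  have hvne : v.toNNReal ≠ 0 := by
    simp only [ne_eq, ← NNReal.coe_eq_zero, hvnn]; exact hv.ne'
  set pdfNN : ℝ → NNReal := fun z => Real.toNNReal (gaussianPDFReal 0 v.toNNReal z) with hpdfNN_def
  have hpdfNNm : Measurable pdfNN := (measurable_gaussianPDFReal 0 v.toNNReal).real_toNNReal
  have hγwd : γ = volume.withDensity (fun z => (pdfNN z : ENNReal)) := by
    rw [hγ_def, gaussianReal_of_var_ne_zero 0 hvne]
    congr 1
  have hpdfval : ∀ z, (pdfNN z : ℝ) = (Real.sqrt (2*Real.pi*v))⁻¹ * Real.exp (-z^2/(2*v)) := by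
    intro z
    have h : gaussianPDFReal 0 v.toNNReal z = (Real.sqrt (2*Real.pi*v))⁻¹ * Real.exp (-z^2/(2*v)) := by
      rw [gaussianPDFReal, Real.coe_toNNReal v hv.le]; ring_nf
    rw [hpdfNN_def]
    simp only [Real.coe_toNNReal', h]
    rw [max_eq_left (by positivity)]
  -- integrability of g on the product
  have hFi : Integrable (fun z => 2 * |f z|) γ := by
    rw [hγwd, integrable_withDensity_iff_integrable_smul hpdfNNm]
    have : Integrable (fun z => (2 * (Real.sqrt (2*Real.pi*v))⁻¹) * |f z * Real.exp (-z^2/(2*v))|) :=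
      (hfi.abs.const_mul _)
    refine this.congr (Filter.Eventually.of_forall fun z => ?_)
    simp only [NNReal.smul_def, smul_eq_mul, hpdfval z, abs_mul,
      abs_of_nonneg (Real.exp_nonneg _)]
    ring
  have hmaj : Integrable (fun r : ℝ × ℝ => 2 * |f r.1|) (γ.prod ν) := by
    have hmapfst : (γ.prod ν).map Prod.fst = γ := by
      rw [Measure.map_fst_prod, hν1, one_smul]
    have h2 : Integrable (fun z => 2*|f z|) ((γ.prod ν).map Prod.fst) := by
      rw [hmapfst]; exact hFi
    have h3 := (integrable_map_measure h2.aestronglyMeasurable measurable_fst.aemeasurable).mp h2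
    simpa [Function.comp_def] using h3
  have hgint : Integrable g (γ.prod ν) := by
    refine hmaj.mono' hgm.aestronglyMeasurable (Filter.Eventually.of_forall fun r => ?_)
    rw [Real.norm_eq_abs, hg_def]
    simp only
    rw [abs_mul]
    have h1 : |(if -(A * s) < r.1 then (1:ℝ) else 0) * (1 + if r.2 ≤ q r.1 then 1 else 0)| ≤ 2 := by
      rw [abs_mul]
      have : |(if -(A * s) < r.1 then (1:ℝ) else 0)| ≤ 1 := by split <;> simp
      have h2 : |(1 + if r.2 ≤ q r.1 then (1:ℝ) else 0)| ≤ 2 := by split <;> norm_num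
      calc |(if -(A * s) < r.1 then (1:ℝ) else 0)| * |1 + if r.2 ≤ q r.1 then (1:ℝ) else 0|
          ≤ 1 * 2 := mul_le_mul this h2 (abs_nonneg _) zero_le_one
        _ = 2 := by norm_num
    calc |f r.1| * |(if -(A * s) < r.1 then (1:ℝ) else 0) * (1 + if r.2 ≤ q r.1 then 1 else 0)|
        ≤ |f r.1| * 2 := mul_le_mul_of_nonneg_left h1 (abs_nonneg _)
      _ = 2 * |f r.1| := by ring
  -- rewrite as integral over product measure
  have step1 : ∫ ω, f (Z ω) * ((if -(A * s) < Z ω then (1:ℝ) else 0)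
        * (1 + if U ω ≤ q (Z ω) then 1 else 0)) ∂μ = ∫ r, g r ∂(γ.prod ν) := by
    rw [← hmap, integral_map (hZm.prodMk hUm).aemeasurable
      (hmap ▸ hgm.aestronglyMeasurable)]
  -- Fubini
  have step2 : ∫ r, g r ∂(γ.prod ν) = ∫ z, (∫ u, g (z, u) ∂ν) ∂γ :=
    MeasureTheory.integral_prod g hgint
  -- inner integral
  have hq_mem : ∀ z : ℝ, -(A*s) < z → 0 < q z ∧ q z ≤ 1 := by
    intro z hz
    constructor
    · exact Real.exp_pos _
    · rw [hq_def]
      simp only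
      rw [Real.exp_le_one_iff]
      have h1 : -A ≤ z / s := le_of_lt (by rw [lt_div_iff₀ hs]; nlinarith)
      have h2 : A * (-A) ≤ A * (z/s) := mul_le_mul_of_nonneg_left h1 hA
      have h3 : A * (z/s) = A*z/s := by ring
      have h4 : 2*A*z/s = 2*(A*z/s) := by ring
      nlinarith [h2, h3, h4]
  have step3 : ∀ z : ℝ, (∫ u, g (z, u) ∂ν)
      = (Ioi (-(A*s))).indicator (fun z => f z * (1 + q z)) z := by
    intro z
    by_cases hz : -(A*s) < z
    · rw [Set.indicator_of_mem (Set.mem_Ioi.mpr hz)]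
      have hgz : (fun u => g (z, u)) = fun u => f z * (1 + if u ≤ q z then 1 else 0) := by
        funext u
        rw [hg_def]
        simp only [if_pos hz, one_mul]
      rw [hgz]
      have hind : Integrable (fun u : ℝ => (1 : ℝ) + if u ≤ q z then 1 else 0) ν := by
        apply Integrable.add (integrable_const _)
        have : (fun u : ℝ => if u ≤ q z then (1:ℝ) else 0) = (Iic (q z)).indicator (fun _ => (1:ℝ)) := by
          funext u; simp [Set.indicator_apply, Set.mem_Iic]
        rw [this]
        exact (integrable_const _).indicator measurableSet_Iic
      rw [integral_const_mul]
      congr 1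
      rw [integral_add (integrable_const _) (by
        have : (fun u : ℝ => if u ≤ q z then (1:ℝ) else 0) = (Iic (q z)).indicator (fun _ => (1:ℝ)) := by
          funext u; simp [Set.indicator_apply, Set.mem_Iic]
        rw [this]
        exact (integrable_const _).indicator measurableSet_Iic)]
      have h1 : ∫ _, (1:ℝ) ∂ν = 1 := by
        rw [integral_const, measureReal_def, hν1]; simp
      have h2 : ∫ u, (if u ≤ q z then (1:ℝ) else 0) ∂ν = q z := by
        have : (fun u : ℝ => if u ≤ q z then (1:ℝ) else 0) = (Iic (q z)).indicator (fun _ => (1:ℝ)) := by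
          funext u; simp [Set.indicator_apply, Set.mem_Iic]
        rw [this, MeasureTheory.integral_indicator_const _ measurableSet_Iic]
        obtain ⟨hq0, hq1⟩ := hq_mem z hz
        have hset : Iic (q z) ∩ Set.Icc (0:ℝ) 1 = Set.Icc 0 (q z) := by
          ext u
          simp only [Set.mem_inter_iff, Set.mem_Iic, Set.mem_Icc]
          constructor
          · rintro ⟨h1', h2', _⟩; exact ⟨h2', h1'⟩
          · rintro ⟨h1', h2'⟩; exact ⟨h2', h1', h2'.trans hq1⟩
        rw [hν_def, measureReal_def, Measure.restrict_apply measurableSet_Iic, hset, Real.volume_Icc,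
          smul_eq_mul, mul_one, ENNReal.toReal_ofReal (by linarith)]
        ring
      rw [h1, h2]
    · rw [Set.indicator_of_notMem (by simpa [Set.mem_Ioi] using hz)]
      have hgz : (fun u => g (z, u)) = fun _ => (0:ℝ) := by
        funext u
        rw [hg_def]
        simp only [if_neg hz, zero_mul, mul_zero]
      rw [hgz, integral_zero]
  set c : ℝ := (Real.sqrt (2*Real.pi*v))⁻¹ with hc_def
  set e1 : ℝ → ℝ := fun z => Real.exp (-z^2/(2*v)) with he1_def
  set e2 : ℝ → ℝ := fun z => Real.exp (-(z+2*A*s)^2/(2*v)) with he2_def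
  have hkey : ∀ z : ℝ, e1 z * q z = e2 z := by
    intro z
    rw [he1_def, he2_def, hq_def]
    simp only
    rw [← Real.exp_add]
    congr 1
    rw [← hs2]
    field_simp
    ring
  have he1m : Measurable e1 := by fun_prop
  have he2m : Measurable e2 := by fun_prop
  have hint2 : IntegrableOn (fun z => f z * e2 z) (Ioi (-(A*s))) := by
    refine Integrable.mono' (hfi.abs.integrableOn) ((hfm.mul he2m).aestronglyMeasurable.restrict) ?_
    rw [ae_restrict_iff' measurableSet_Ioi]
    refine Filter.Eventually.of_forall fun z hz => ?_
    rw [Real.norm_eq_abs, abs_mul, abs_mul]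
    have hq01 := hq_mem z hz
    have : |e2 z| ≤ |e1 z| := by
      rw [← hkey z, abs_mul, abs_of_nonneg (le_of_lt (Real.exp_pos _)),
        abs_of_nonneg (le_of_lt (Real.exp_pos _))]
      nlinarith [Real.exp_pos (-z^2/(2*v)), hq01.2, hq01.1]
    exact mul_le_mul_of_nonneg_left this (abs_nonneg _)
  have hint1 : IntegrableOn (fun z => f z * e1 z) (Ioi (-(A*s))) := hfi.integrableOn
  rw [step1, step2]
  have step3' : (∫ z, (∫ u, g (z, u) ∂ν) ∂γ)
      = ∫ z, (Ioi (-(A*s))).indicator (fun z => f z * (1 + q z)) z ∂γ := by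
    congr 1; funext z; exact step3 z
  rw [step3']
  rw [hγwd, integral_withDensity_eq_integral_smul hpdfNNm]
  have step5 : (fun z => pdfNN z • (Ioi (-(A*s))).indicator (fun z => f z * (1 + q z)) z)
      = (Ioi (-(A*s))).indicator (fun z => c * (f z * e1 z + f z * e2 z)) := by
    funext z
    by_cases hz : z ∈ Ioi (-(A*s))
    · rw [Set.indicator_of_mem hz, Set.indicator_of_mem hz, NNReal.smul_def, smul_eq_mul,
        hpdfval z, ← hkey z]
      ring
    · rw [Set.indicator_of_notMem hz, Set.indicator_of_notMem hz, smul_zero]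
  rw [step5, MeasureTheory.integral_indicator measurableSet_Ioi]
  rw [MeasureTheory.integral_const_mul]
  rw [MeasureTheory.integral_add hint1 hint2]

set_option maxHeartbeats 2000000

/-- First and second moment identities for the reflecting weight (Lemma 4.1, (ziid)):
with `ϑ = (2π)^{−1/2} e^{−a²/2} − a·Φ̄(a)` one has `E[Z·m̄] = 2√Δ·ϑ`,
`E[Z²·m̄] = Δ − 4Δ·a·ϑ` and `0 ≤ ϑ ≤ (2π)^{−1/2} e^{−a²/2}`. -/
theorem stmt_5 (L Δ σ0 x : ℝ) (hΔ : 0 < Δ) (hσ0 : 0 < σ0) (hx : L ≤ x)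
    {Ω : Type*} [MeasurableSpace Ω] (μ : Measure Ω) [IsProbabilityMeasure μ]
    (Z U : Ω → ℝ) (hZm : Measurable Z) (hUm : Measurable U)
    (hZ : μ.map Z = gaussianReal 0 Δ.toNNReal)
    (hU : μ.map U = volume.restrict (Set.Icc (0 : ℝ) 1))
    (hZU : IndepFun Z U μ)
    (X : Ω → ℝ) (hX : ∀ ω, X ω = x + σ0 * Z ω)
    (a : ℝ) (ha : a = (x - L) / (σ0 * Real.sqrt Δ))
    (p : Ω → ℝ)
    (hp : ∀ ω, p ω = Real.exp (-2 * (x - L) * (X ω - L) / (σ0 ^ 2 * Δ)))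
    (mbar : Ω → ℝ)
    (hmbar : ∀ ω, mbar ω
      = (if L < X ω then (1 : ℝ) else 0) * (1 + if U ω ≤ p ω then 1 else 0))
    (Φ : ℝ → ℝ)
    (hΦ : ∀ s, Φ s = (1 / Real.sqrt (2 * Real.pi)) * ∫ z in Set.Iic s, Real.exp (-z ^ 2 / 2))
    (ϑ : ℝ)
    (hϑ : ϑ = (1 / Real.sqrt (2 * Real.pi)) * Real.exp (-a ^ 2 / 2) - a * (1 - Φ a)) :
    (∫ ω, Z ω * mbar ω ∂μ = 2 * Real.sqrt Δ * ϑ)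
      ∧ (∫ ω, Z ω ^ 2 * mbar ω ∂μ = Δ - 4 * Δ * a * ϑ)
      ∧ 0 ≤ ϑ ∧ ϑ ≤ (1 / Real.sqrt (2 * Real.pi)) * Real.exp (-a ^ 2 / 2) := by
  have hr : 0 < Real.sqrt Δ := Real.sqrt_pos.mpr hΔ
  set r : ℝ := Real.sqrt Δ with hr_def
  have hr2 : r^2 = Δ := Real.sq_sqrt hΔ.le
  have hA : 0 ≤ a := by
    rw [ha]; exact div_nonneg (by linarith) (by positivity)
  set t2 : ℝ := Real.sqrt (2*Real.pi) with ht2_def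
  have ht2pos : 0 < t2 := Real.sqrt_pos.mpr (by positivity)
  set E : ℝ := Real.exp (-a^2/2) with hE_def
  set G : ℝ := ∫ t in Ioi a, Real.exp (-t^2/2) with hG_def
  set G' : ℝ := ∫ t in Ioi (-a), Real.exp (-t^2/2) with hG'_def
  have hexp1 : ∀ z : ℝ, Real.exp (-z^2/(2*(1:ℝ))) = Real.exp (-z^2/2) := by
    intro z; norm_num
  have hint0_1 : Integrable (fun z : ℝ => Real.exp (-z^2/2)) := by
    have := aux_int0 (one_pos)
    simpa only [hexp1] using this
  -- base integrals
  have hexpm : Real.exp (-(-(a*r))^2/(2*Δ)) = E := by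
    rw [hE_def]; congr 1; rw [← hr2]; field_simp
  have hexpp : Real.exp (-(a*r)^2/(2*Δ)) = E := by
    rw [hE_def]; congr 1; rw [← hr2]; field_simp
  have hI1m : ∫ z in Ioi (-(a*r)), z * Real.exp (-z^2/(2*Δ)) = Δ * E := by
    rw [aux_I1 hΔ, hexpm]
  have hI1p : ∫ z in Ioi (a*r), z * Real.exp (-z^2/(2*Δ)) = Δ * E := by
    rw [aux_I1 hΔ, hexpp]
  have hE0p : ∫ z in Ioi (a*r), Real.exp (-z^2/(2*Δ)) = r * G := by
    rw [aux_scale hΔ, hG_def, mul_div_assoc, div_self hr.ne', mul_one]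
  have hE0m : ∫ z in Ioi (-(a*r)), Real.exp (-z^2/(2*Δ)) = r * G' := by
    rw [aux_scale hΔ, hG'_def, show -(a*r)/r = -a by field_simp]
  have hI2m : ∫ z in Ioi (-(a*r)), z^2 * Real.exp (-z^2/(2*Δ))
      = Δ * (-(a*r)) * E + Δ * (r * G') := by
    rw [aux_I2 hΔ, hE0m, hexpm]
  have hI2p : ∫ z in Ioi (a*r), z^2 * Real.exp (-z^2/(2*Δ))
      = Δ * (a*r) * E + Δ * (r * G) := by
    rw [aux_I2 hΔ, hE0p, hexpp]
  have hGG' : G + G' = t2 := by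
    have hsplit2 := intervalIntegral.integral_Iic_add_Ioi (b := -a)
      (f := fun t : ℝ => Real.exp (-t^2/2)) hint0_1.integrableOn hint0_1.integrableOn
    rw [aux_total] at hsplit2
    have hsym := aux_sym a
    rw [hsym] at hsplit2
    rw [← ht2_def] at hsplit2
    exact hsplit2
  have hsplit := intervalIntegral.integral_Iic_add_Ioi (b := a)
    (f := fun t : ℝ => Real.exp (-t^2/2)) hint0_1.integrableOn hint0_1.integrableOn
  rw [aux_total, ← ht2_def] at hsplit
  have hΦbar : 1 - Φ a = t2⁻¹ * G := by
    rw [hΦ a]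
    have hIic : ∫ z in Iic a, Real.exp (-z ^ 2 / 2) = t2 - G := by
      rw [← hG_def] at hsplit
      linarith [hsplit]
    rw [hIic]
    field_simp; ring
  have hGnn : 0 ≤ G := by
    rw [hG_def]
    exact setIntegral_nonneg measurableSet_Ioi fun t _ => (Real.exp_pos _).le
  have haG : a * G ≤ E := by
    have h1 : ∫ u in Ioi a, a * Real.exp (-u^2/2) ≤ ∫ u in Ioi a, u * Real.exp (-u^2/2) := by
      apply setIntegral_mono_on
      · exact (hint0_1.const_mul a).integrableOn
      · have h := aux_int1 (one_pos)
        have h4 : ∀ u : ℝ, u * Real.exp (-u^2/(2*(1:ℝ))) = u * Real.exp (-u^2/2) := by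
          intro u; norm_num
        simp only [h4] at h
        exact h.integrableOn
      · exact measurableSet_Ioi
      · intro u hu
        have : a ≤ u := le_of_lt hu
        nlinarith [Real.exp_pos (-u^2/2)]
    have h2 : ∫ u in Ioi a, u * Real.exp (-u^2/2) = E := by
      have h3 := aux_I1 (v := 1) one_pos a
      have h4 : ∀ u : ℝ, u * Real.exp (-u^2/(2*(1:ℝ))) = u * Real.exp (-u^2/2) := by
        intro u; norm_num
      simp only [h4] at h3
      rw [h3, hE_def]
      norm_num
    rw [MeasureTheory.integral_const_mul, h2] at h1
    rw [hG_def]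
    exact h1
  -- pointwise identification of mbar
  have har : a * r = (x - L)/σ0 := by
    rw [ha]; field_simp
  have hms : ∀ ω, mbar ω = (if -(a * Real.sqrt Δ) < Z ω then (1:ℝ) else 0)
      * (1 + if U ω ≤ Real.exp (-2*a^2 - 2*a*(Z ω)/Real.sqrt Δ) then 1 else 0) := by
    intro ω
    have hiff1 : (L < X ω) = (-(a * Real.sqrt Δ) < Z ω) := by
      rw [hX ω, ← hr_def, har]
      apply propext
      rw [show -((x - L)/σ0) = (L - x)/σ0 by ring, div_lt_iff₀ hσ0]
      constructor <;> intro h <;> nlinarith [h]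
    have hpeq : p ω = Real.exp (-2*a^2 - 2*a*(Z ω)/Real.sqrt Δ) := by
      rw [hp ω, hX ω]
      congr 1
      rw [ha, ← hr_def, ← hr2]
      field_simp
      ring
    simp only [hmbar ω, hiff1, hpeq]
  have hL1 : ∫ ω, Z ω * mbar ω ∂μ
      = ∫ ω, (fun z : ℝ => z) (Z ω) * ((if -(a * Real.sqrt Δ) < Z ω then (1:ℝ) else 0)
        * (1 + if U ω ≤ Real.exp (-2*a^2 - 2*a*(Z ω)/Real.sqrt Δ) then 1 else 0)) ∂μ := by
    congr 1; funext ω; rw [hms ω]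
  have hL2 : ∫ ω, Z ω ^ 2 * mbar ω ∂μ
      = ∫ ω, (fun z : ℝ => z^2) (Z ω) * ((if -(a * Real.sqrt Δ) < Z ω then (1:ℝ) else 0)
        * (1 + if U ω ≤ Real.exp (-2*a^2 - 2*a*(Z ω)/Real.sqrt Δ) then 1 else 0)) ∂μ := by
    congr 1; funext ω; rw [hms ω]
  have hm1 := aux_prob μ Z U hZm hUm Δ hΔ hZ hU hZU a hA (fun z : ℝ => z)
    measurable_id (by simpa using aux_int1 hΔ)
  have hm2 := aux_prob μ Z U hZm hUm Δ hΔ hZ hU hZU a hA (fun z : ℝ => z^2)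
    (measurable_id.pow_const 2) (by simpa using aux_int2 hΔ)
  beta_reduce at hm1 hm2
  rw [← hr_def] at hm1 hm2
  -- shifted integrals
  have hS2 : ∫ z in Ioi (-(a*r)), z * Real.exp (-(z+2*a*r)^2/(2*Δ)) = Δ * E - 2*a*r*(r*G) := by
    have hshift := aux_shift (fun w => (w - 2*a*r) * Real.exp (-w^2/(2*Δ))) (-(a*r)) (2*a*r)
    have hfun : ∀ z : ℝ, (z + 2*a*r - 2*a*r) * Real.exp (-(z + 2*a*r)^2/(2*Δ))
        = z * Real.exp (-(z+2*a*r)^2/(2*Δ)) := by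
      intro z; ring_nf
    simp only [hfun] at hshift
    rw [hshift, show -(a*r) + 2*a*r = a*r by ring]
    have hsub : ∫ w in Ioi (a*r), (w - 2*a*r) * Real.exp (-w^2/(2*Δ))
        = (∫ w in Ioi (a*r), w * Real.exp (-w^2/(2*Δ)))
          - ∫ w in Ioi (a*r), (2*a*r) * Real.exp (-w^2/(2*Δ)) := by
      rw [← MeasureTheory.integral_sub ((aux_int1 hΔ).integrableOn)
        (((aux_int0 hΔ).const_mul _).integrableOn)]
      congr 1; funext w; ring
    rw [hsub, hI1p, MeasureTheory.integral_const_mul, hE0p]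
  have hS2' : ∫ z in Ioi (-(a*r)), z^2 * Real.exp (-(z+2*a*r)^2/(2*Δ))
      = ((Δ * (a*r) * E + Δ * (r * G)) - 4*a*r*(Δ*E)) + 4*a^2*r^2*(r*G) := by
    have hshift := aux_shift (fun w => (w - 2*a*r)^2 * Real.exp (-w^2/(2*Δ))) (-(a*r)) (2*a*r)
    have hfun : ∀ z : ℝ, (z + 2*a*r - 2*a*r)^2 * Real.exp (-(z + 2*a*r)^2/(2*Δ))
        = z^2 * Real.exp (-(z+2*a*r)^2/(2*Δ)) := by
      intro z; ring_nf
    simp only [hfun] at hshift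
    rw [hshift, show -(a*r) + 2*a*r = a*r by ring]
    have hsub : ∫ w in Ioi (a*r), (w - 2*a*r)^2 * Real.exp (-w^2/(2*Δ))
        = ((∫ w in Ioi (a*r), w^2 * Real.exp (-w^2/(2*Δ)))
          - ∫ w in Ioi (a*r), (4*a*r) * (w * Real.exp (-w^2/(2*Δ))))
          + ∫ w in Ioi (a*r), (4*a^2*r^2) * Real.exp (-w^2/(2*Δ)) := by
      have heq : (fun w : ℝ => (w - 2*a*r)^2 * Real.exp (-w^2/(2*Δ)))
          = fun w : ℝ => (w^2 * Real.exp (-w^2/(2*Δ)) - (4*a*r) * (w * Real.exp (-w^2/(2*Δ))))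
            + (4*a^2*r^2) * Real.exp (-w^2/(2*Δ)) := by
        funext w; ring
      have hA : IntegrableOn (fun w : ℝ => w^2 * Real.exp (-w^2/(2*Δ))
          - 4*a*r * (w * Real.exp (-w^2/(2*Δ)))) (Ioi (a*r)) :=
        ((aux_int2 hΔ).sub ((aux_int1 hΔ).const_mul (4*a*r))).integrableOn
      have hB : IntegrableOn (fun w : ℝ => 4*a^2*r^2 * Real.exp (-w^2/(2*Δ))) (Ioi (a*r)) :=
        ((aux_int0 hΔ).const_mul _).integrableOn
      have hC : IntegrableOn (fun w : ℝ => w^2 * Real.exp (-w^2/(2*Δ))) (Ioi (a*r)) :=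
        (aux_int2 hΔ).integrableOn
      have hD : IntegrableOn (fun w : ℝ => 4*a*r * (w * Real.exp (-w^2/(2*Δ)))) (Ioi (a*r)) :=
        ((aux_int1 hΔ).const_mul (4*a*r)).integrableOn
      rw [heq, MeasureTheory.integral_add hA hB, MeasureTheory.integral_sub hC hD]
    rw [hsub, hI2p, MeasureTheory.integral_const_mul, MeasureTheory.integral_const_mul, hI1p, hE0p]
  have hsqrt2πΔ : Real.sqrt (2*Real.pi*Δ) = t2 * r := by
    rw [ht2_def, hr_def, ← Real.sqrt_mul (by positivity)]
  have hϑ_eq : ϑ = (E - a*G) * t2⁻¹ := by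
    rw [hϑ, hΦbar]; field_simp
  have hϑnn : 0 ≤ ϑ := by
    rw [hϑ_eq]; exact mul_nonneg (by linarith) (by positivity)
  have hϑle : ϑ ≤ 1/t2 * E := by
    rw [hϑ_eq]
    have h1 : (0:ℝ) ≤ a * G * t2⁻¹ := by positivity
    have h2 : (E - a*G) * t2⁻¹ = 1/t2 * E - a*G*t2⁻¹ := by ring
    linarith [h1, h2]
  have hG'e : G' = t2 - G := by linarith [hGG']
  refine ⟨?_, ?_, hϑnn, hϑle⟩
  · rw [hL1, hm1, hI1m, hS2, hsqrt2πΔ, hϑ_eq, ← hr2]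
    field_simp
    ring
  · rw [hL2, hm2, hI2m, hS2', hsqrt2πΔ, hϑ_eq, hG'e, ← hr2]
    field_simp
    ring
end

section
/- Martingale/supermartingale structure of the reflecting and killing product weights: with respect to the filtration (F_i)_{0≤i≤n}, the process (M̄_i)_{0≤i≤n} is a martingale (in particular E[M̄_n] = 1), while the process (M_i)_{0≤i≤n} is a supermartingale. -/
open MeasureTheory ProbabilityTheory Real

/-- The law of one Euler step auxiliary pair: a Gaussian `N(0, d)` increment together with
an independent uniform variable on `[0,1]`. -/
noncomputable def stepLaw (d : ℝ) : Measure (ℝ × ℝ) :=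
  (gaussianReal 0 d.toNNReal).prod (volume.restrict (Set.Icc (0 : ℝ) 1))

open scoped NNReal ENNReal

set_option maxHeartbeats 1000000
set_option linter.unusedVariables false

namespace Stmt9

instance : IsProbabilityMeasure (volume.restrict (Set.Icc (0 : ℝ) 1)) :=
  ⟨by simp [Real.volume_Icc]⟩

instance (d : ℝ) : IsProbabilityMeasure (stepLaw d) := by
  unfold stepLaw; infer_instance

/-- one-step probability factor -/
noncomputable def pf (L Δ : ℝ) (σ : ℝ → ℝ) (y z : ℝ) : ℝ :=
  Real.exp (-2 * (y - L) * (y + σ y * z - L) / (σ y ^ 2 * Δ))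

noncomputable def stepb (L Δ : ℝ) (σ : ℝ → ℝ) (y : ℝ) (ζ : ℝ × ℝ) : ℝ :=
  (if L < y + σ y * ζ.1 then (1:ℝ) else 0) * (1 + if ζ.2 ≤ pf L Δ σ y ζ.1 then 1 else 0)

noncomputable def stepk (L Δ : ℝ) (σ : ℝ → ℝ) (y : ℝ) (ζ : ℝ × ℝ) : ℝ :=
  (if L < y + σ y * ζ.1 then (1:ℝ) else 0) * (if pf L Δ σ y ζ.1 < ζ.2 then 1 else 0)

noncomputable def g (x : ℝ) (σ : ℝ → ℝ) : (i : ℕ) → (Fin i → ℝ × ℝ) → ℝ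
  | 0, _ => x
  | i+1, f => g x σ i (f ∘ Fin.castSucc) + σ (g x σ i (f ∘ Fin.castSucc)) * (f (Fin.last i)).1

noncomputable def G (x : ℝ) (σ : ℝ → ℝ) (st : ℝ → ℝ × ℝ → ℝ) : (i : ℕ) → (Fin i → ℝ × ℝ) → ℝ
  | 0, _ => 1
  | i+1, f => G x σ st i (f ∘ Fin.castSucc) * st (g x σ i (f ∘ Fin.castSucc)) (f (Fin.last i))

variable {L Δ c x : ℝ} {σ : ℝ → ℝ}

lemma measurable_pf (hσ : Measurable σ) :
    Measurable (fun q : ℝ × (ℝ × ℝ) => pf L Δ σ q.1 q.2.1) := by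
  unfold pf; fun_prop

lemma measurable_stepb (hσ : Measurable σ) :
    Measurable (fun q : ℝ × (ℝ × ℝ) => stepb L Δ σ q.1 q.2) := by
  unfold stepb
  apply Measurable.mul
  · exact Measurable.ite (measurableSet_lt measurable_const (by fun_prop)) measurable_const
      measurable_const
  · apply Measurable.add measurable_const
    exact Measurable.ite (measurableSet_le measurable_snd.snd (measurable_pf hσ))
      measurable_const measurable_const

lemma measurable_stepk (hσ : Measurable σ) :
    Measurable (fun q : ℝ × (ℝ × ℝ) => stepk L Δ σ q.1 q.2) := by
  unfold stepk
  apply Measurable.mul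
  · exact Measurable.ite (measurableSet_lt measurable_const (by fun_prop)) measurable_const
      measurable_const
  · exact Measurable.ite (measurableSet_lt (measurable_pf hσ) measurable_snd.snd)
      measurable_const measurable_const

lemma measurable_g (hσ : Measurable σ) (i : ℕ) : Measurable (g x σ i) := by
  induction i with
  | zero => exact measurable_const
  | succ i ih =>
    have h1 : Measurable fun f : Fin (i+1) → ℝ × ℝ => f ∘ Fin.castSucc := by
      exact measurable_pi_iff.2 fun j => measurable_pi_apply _
    have h2 := ih.comp h1
    exact (h2.add ((hσ.comp h2).mul ((measurable_pi_apply (Fin.last i)).fst)))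

lemma measurable_G (hσ : Measurable σ) {st : ℝ → ℝ × ℝ → ℝ}
    (hst : Measurable (fun q : ℝ × (ℝ × ℝ) => st q.1 q.2)) (i : ℕ) :
    Measurable (G x σ st i) := by
  induction i with
  | zero => exact measurable_const
  | succ i ih =>
    have h1 : Measurable fun f : Fin (i+1) → ℝ × ℝ => f ∘ Fin.castSucc :=
      measurable_pi_iff.2 fun j => measurable_pi_apply _
    exact (ih.comp h1).mul (hst.comp (((measurable_g hσ i).comp h1).prodMk
      (measurable_pi_apply (Fin.last i))))

lemma stepb_nonneg (y : ℝ) (ζ : ℝ × ℝ) : 0 ≤ stepb L Δ σ y ζ := by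
  unfold stepb; positivity

lemma stepb_le_two (y : ℝ) (ζ : ℝ × ℝ) : stepb L Δ σ y ζ ≤ 2 := by
  unfold stepb
  have h1 : (if L < y + σ y * ζ.1 then (1:ℝ) else 0) ≤ 1 := by split <;> norm_num
  have h0 : (0:ℝ) ≤ (if L < y + σ y * ζ.1 then (1:ℝ) else 0) := by positivity
  have h2 : (1 + if ζ.2 ≤ pf L Δ σ y ζ.1 then (1:ℝ) else 0) ≤ 2 := by split <;> norm_num
  calc _ ≤ 1 * (1 + if ζ.2 ≤ pf L Δ σ y ζ.1 then (1:ℝ) else 0) := by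
        apply mul_le_mul_of_nonneg_right h1; positivity
    _ ≤ 2 := by rw [one_mul]; exact h2

lemma stepk_nonneg (y : ℝ) (ζ : ℝ × ℝ) : 0 ≤ stepk L Δ σ y ζ := by
  unfold stepk; positivity

lemma stepk_le_one (y : ℝ) (ζ : ℝ × ℝ) : stepk L Δ σ y ζ ≤ 1 := by
  unfold stepk
  have h1 : (if L < y + σ y * ζ.1 then (1:ℝ) else 0) ≤ 1 := by split <;> norm_num
  have h2 : (if pf L Δ σ y ζ.1 < ζ.2 then (1:ℝ) else 0) ≤ 1 := by split <;> norm_num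
  calc _ ≤ 1 * (if pf L Δ σ y ζ.1 < ζ.2 then (1:ℝ) else 0) := by
        apply mul_le_mul_of_nonneg_right h1; positivity
    _ ≤ 1 := by rw [one_mul]; exact h2

lemma G_nonneg {st : ℝ → ℝ × ℝ → ℝ} (h0 : ∀ y ζ, 0 ≤ st y ζ) (i : ℕ) (f : Fin i → ℝ × ℝ) :
    0 ≤ G x σ st i f := by
  induction i with
  | zero => norm_num [G]
  | succ i ih => exact mul_nonneg (ih _) (h0 _ _)

lemma G_le {st : ℝ → ℝ × ℝ → ℝ} {B : ℝ} (h0 : ∀ y ζ, 0 ≤ st y ζ) (hB : ∀ y ζ, st y ζ ≤ B)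
    (i : ℕ) (f : Fin i → ℝ × ℝ) : G x σ st i f ≤ B ^ i := by
  induction i with
  | zero => norm_num [G]
  | succ i ih =>
    rw [pow_succ]
    have hB0 : 0 ≤ B := le_trans (h0 0 (0,0)) (hB 0 (0,0))
    exact mul_le_mul (ih _) (hB _ _) (h0 _ _) (pow_nonneg hB0 _)

lemma le_g_of_G_ne_zero (hx : L ≤ x) (i : ℕ) (f : Fin i → ℝ × ℝ)
    (h : G x σ (stepb L Δ σ) i f ≠ 0) : L ≤ g x σ i f := by
  induction i with
  | zero => exact hx
  | succ i ih =>
    show L ≤ g x σ i (f ∘ Fin.castSucc) + σ (g x σ i (f ∘ Fin.castSucc)) * (f (Fin.last i)).1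
    have h2 : stepb L Δ σ (g x σ i (f ∘ Fin.castSucc)) (f (Fin.last i)) ≠ 0 := by
      intro hz
      exact h (by show G x σ _ i _ * _ = 0; rw [hz, mul_zero])
    unfold stepb at h2
    by_contra hcon
    push_neg at hcon
    rw [if_neg (by exact not_lt.2 hcon.le)] at h2
    exact h2 (zero_mul _)

end Stmt9

namespace Stmt9

lemma gaussian_integral_eq (v : ℝ≥0) (hv : v ≠ 0) (f : ℝ → ℝ) :
    ∫ z, f z ∂(gaussianReal 0 v) = ∫ z, gaussianPDFReal 0 v z * f z := by
  rw [gaussianReal_of_var_ne_zero _ hv]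
  have h : gaussianPDF 0 v = fun x => ((gaussianPDFReal 0 v x).toNNReal : ℝ≥0∞) := rfl
  rw [h, integral_withDensity_eq_integral_smul (measurable_gaussianPDFReal 0 v).real_toNNReal f]
  congr 1; funext z
  rw [NNReal.smul_def, Real.coe_toNNReal _ (gaussianPDFReal_nonneg 0 v z), smul_eq_mul]

lemma integral_uniform_ind {p : ℝ} (hp : 0 < p) :
    ∫ u in Set.Icc (0:ℝ) 1, (if u ≤ p then (1:ℝ) else 0) = min p 1 := by
  have h : (fun u : ℝ => if u ≤ p then (1:ℝ) else 0)
      = (Set.Iic p).indicator (fun _ => (1:ℝ)) := by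
    funext u; by_cases h : u ≤ p <;> simp [Set.indicator, h]
  rw [h, integral_indicator measurableSet_Iic, Measure.restrict_restrict measurableSet_Iic,
    setIntegral_const]
  have hset : Set.Iic p ∩ Set.Icc (0:ℝ) 1 = Set.Icc 0 (min p 1) := by
    ext u
    simp only [Set.mem_inter_iff, Set.mem_Iic, Set.mem_Icc, le_min_iff]
    constructor
    · rintro ⟨h1, h2, h3⟩; exact ⟨h2, h1, h3⟩
    · rintro ⟨h1, h2, h3⟩; exact ⟨h2, h1, h3⟩
  rw [hset, measureReal_def, Real.volume_Icc, smul_eq_mul, mul_one, ENNReal.toReal_ofReal]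
  · rw [sub_zero]
  · rw [sub_zero]; exact le_min hp.le zero_le_one

lemma gaussianPDFReal_even (v : ℝ≥0) (w : ℝ) :
    gaussianPDFReal 0 v (-w) = gaussianPDFReal 0 v w := by
  unfold gaussianPDFReal
  rw [sub_zero, sub_zero, neg_sq]

variable {L Δ : ℝ} {σ : ℝ → ℝ}

lemma measurable_stepb' (hσ : Measurable σ) (y : ℝ) :
    Measurable (stepb L Δ σ y) := by
  unfold stepb
  apply Measurable.mul
  · exact Measurable.ite (measurableSet_lt measurable_const (by fun_prop)) measurable_const
      measurable_const
  · apply Measurable.add measurable_const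
    have hq : Measurable fun ζ : ℝ × ℝ => pf L Δ σ y ζ.1 := by unfold pf; fun_prop
    exact Measurable.ite (measurableSet_le measurable_snd hq) measurable_const measurable_const

lemma integral_stepb (hΔ : 0 < Δ) (hσm : Measurable σ) (hσpos : ∀ z, 0 < σ z)
    {y : ℝ} (hy : L ≤ y) :
    ∫ ζ, stepb L Δ σ y ζ ∂(stepLaw Δ) = 1 := by
  have hσ0 : 0 < σ y := hσpos y
  have hσ0' : σ y ≠ 0 := hσ0.ne'
  have hΔ' : Δ ≠ 0 := hΔ.ne'
  set v : ℝ≥0 := Δ.toNNReal with hvdef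
  have hvne : v ≠ 0 := by
    simp only [hvdef, ne_eq, Real.toNNReal_eq_zero, not_le]
    exact hΔ
  have hvΔ : (v:ℝ) = Δ := Real.coe_toNNReal _ hΔ.le
  set s : ℝ := (L - y) / σ y with hsdef
  set k : ℝ := 2 * (y - L) / σ y with hkdef
  -- integrability of stepb over the product
  have hmeas : Measurable (stepb L Δ σ y) := measurable_stepb' hσm y
  have hint : Integrable (stepb L Δ σ y) (stepLaw Δ) :=
    (integrable_const (2:ℝ)).mono' hmeas.aestronglyMeasurable
      (Filter.Eventually.of_forall fun ζ => by
        rw [Real.norm_eq_abs, abs_of_nonneg (stepb_nonneg _ _)]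
        exact stepb_le_two _ _)
  have hprod : stepLaw Δ = (gaussianReal 0 v).prod (volume.restrict (Set.Icc (0:ℝ) 1)) := rfl
  rw [hprod] at hint ⊢
  rw [integral_prod _ hint]
  -- inner integral
  have hinner : ∀ z : ℝ, ∫ u, stepb L Δ σ y (z, u) ∂(volume.restrict (Set.Icc (0:ℝ) 1))
      = (if s < z then (1:ℝ) else 0)
        + (if s < z then (1:ℝ) else 0) * pf L Δ σ y z := by
    intro z
    have hcond : (L < y + σ y * z) ↔ s < z := by
      rw [hsdef, div_lt_iff₀ hσ0, sub_lt_iff_lt_add, mul_comm, add_comm]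
    have hpf : 0 < pf L Δ σ y z := Real.exp_pos _
    calc ∫ u, stepb L Δ σ y (z, u) ∂(volume.restrict (Set.Icc (0:ℝ) 1))
        = ∫ u, (if L < y + σ y * z then (1:ℝ) else 0)
            * (1 + if u ≤ pf L Δ σ y z then (1:ℝ) else 0)
            ∂(volume.restrict (Set.Icc (0:ℝ) 1)) := rfl
      _ = (if L < y + σ y * z then (1:ℝ) else 0)
            * ∫ u, (1 + if u ≤ pf L Δ σ y z then (1:ℝ) else 0)
            ∂(volume.restrict (Set.Icc (0:ℝ) 1)) := integral_const_mul _ _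
      _ = (if L < y + σ y * z then (1:ℝ) else 0) * (1 + min (pf L Δ σ y z) 1) := by
          congr 1
          rw [integral_add (integrable_const 1)]
          · rw [integral_const]
            simp only [measureReal_def, measure_univ, ENNReal.toReal_one, one_smul]
            congr 1
            exact integral_uniform_ind hpf
          · have h : (fun u : ℝ => if u ≤ pf L Δ σ y z then (1:ℝ) else 0)
                = (Set.Iic (pf L Δ σ y z)).indicator (fun _ => (1:ℝ)) := by
              funext u; by_cases h : u ≤ pf L Δ σ y z <;> simp [Set.indicator, h]
            rw [h]
            exact (integrable_const (1:ℝ)).indicator measurableSet_Iic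
      _ = (if s < z then (1:ℝ) else 0) + (if s < z then (1:ℝ) else 0) * pf L Δ σ y z := by
          by_cases h : s < z
          · rw [if_pos (hcond.2 h), if_pos h]
            have hple : pf L Δ σ y z ≤ 1 := by
              rw [pf, Real.exp_le_one_iff]
              apply div_nonpos_of_nonpos_of_nonneg
              · have h1 : 0 ≤ y - L := by linarith
                have h2 : 0 ≤ y + σ y * z - L := by
                  have := hcond.2 h
                  linarith
                nlinarith
              · positivity
            rw [min_eq_left hple]; ring
          · rw [if_neg (fun hc => h (hcond.1 hc)), if_neg h]; ring
  rw [integral_congr_ae (Filter.Eventually.of_forall hinner)]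
  -- split the gaussian integral
  have hind_meas : Measurable fun z : ℝ => (if s < z then (1:ℝ) else 0) :=
    Measurable.ite measurableSet_Ioi measurable_const measurable_const
  have hpf_meas : Measurable fun z : ℝ => pf L Δ σ y z := by unfold pf; fun_prop
  have hint1 : Integrable (fun z : ℝ => (if s < z then (1:ℝ) else 0)) (gaussianReal 0 v) :=
    (integrable_const (1:ℝ)).mono' hind_meas.aestronglyMeasurable
      (Filter.Eventually.of_forall fun z => by
        rw [Real.norm_eq_abs]; split <;> simp)
  have hint2 : Integrable (fun z : ℝ => (if s < z then (1:ℝ) else 0) * pf L Δ σ y z)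
      (gaussianReal 0 v) :=
    (integrable_const (1:ℝ)).mono' (hind_meas.mul hpf_meas).aestronglyMeasurable
      (Filter.Eventually.of_forall fun z => by
        rw [Real.norm_eq_abs]
        by_cases h : s < z
        · rw [if_pos h, one_mul, pf, abs_of_nonneg (Real.exp_pos _).le, Real.exp_le_one_iff]
          apply div_nonpos_of_nonpos_of_nonneg
          · have h2 : 0 ≤ y + σ y * z - L := by
              have : L < y + σ y * z := by
                rw [hsdef, div_lt_iff₀ hσ0] at h
                linarith [h.le]
              linarith
            nlinarith [sub_nonneg.2 hy]
          · positivity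
        · rw [if_neg h, zero_mul, abs_zero]; norm_num)
  rw [integral_add hint1 hint2]
  -- move to pdf-weighted Lebesgue integrals
  rw [gaussian_integral_eq v hvne, gaussian_integral_eq v hvne]
  -- second piece: shift
  have hshift : ∀ z : ℝ, gaussianPDFReal 0 v z * pf L Δ σ y z = gaussianPDFReal 0 v (z + k) := by
    intro z
    unfold gaussianPDFReal pf
    rw [hvΔ, sub_zero, sub_zero, mul_assoc, ← Real.exp_add]
    congr 1
    rw [hkdef]
    field_simp
    ring
  have hJ2 : ∫ z, gaussianPDFReal 0 v z * ((if s < z then (1:ℝ) else 0) * pf L Δ σ y z)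
      = ∫ z, (if z < s then (1:ℝ) else 0) * gaussianPDFReal 0 v z := by
    have h1 : ∀ z : ℝ, gaussianPDFReal 0 v z * ((if s < z then (1:ℝ) else 0) * pf L Δ σ y z)
        = (fun w => (if s + k < w then (1:ℝ) else 0) * gaussianPDFReal 0 v w) (z + k) := by
      intro z
      simp only [add_lt_add_iff_right]
      rw [← hshift z]; ring
    rw [integral_congr_ae (Filter.Eventually.of_forall h1),
      MeasureTheory.integral_add_right_eq_self
        (fun w => (if s + k < w then (1:ℝ) else 0) * gaussianPDFReal 0 v w) k]
    have hsk : s + k = -s := by rw [hsdef, hkdef]; field_simp; ring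
    rw [hsk]
    have h2 : ∀ w : ℝ, (if -s < w then (1:ℝ) else 0) * gaussianPDFReal 0 v w
        = (fun w' => (if w' < s then (1:ℝ) else 0) * gaussianPDFReal 0 v w') (-w) := by
      intro w
      simp only [neg_lt]
      rw [gaussianPDFReal_even]
    rw [integral_congr_ae (Filter.Eventually.of_forall h2),
      MeasureTheory.integral_neg_eq_self
        (fun w' => (if w' < s then (1:ℝ) else 0) * gaussianPDFReal 0 v w')]
  rw [hJ2]
  have hJ1 : ∫ z, gaussianPDFReal 0 v z * (if s < z then (1:ℝ) else 0)
      = ∫ z, (if s < z then (1:ℝ) else 0) * gaussianPDFReal 0 v z := by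
    congr 1; funext z; ring
  rw [hJ1]
  -- combine
  have hm1 : Integrable (fun z : ℝ => (if s < z then (1:ℝ) else 0) * gaussianPDFReal 0 v z) :=
    (integrable_gaussianPDFReal 0 v).mono'
      (hind_meas.mul (measurable_gaussianPDFReal 0 v)).aestronglyMeasurable
      (Filter.Eventually.of_forall fun z => by
        rw [Real.norm_eq_abs]
        by_cases h : s < z
        · rw [if_pos h, one_mul, abs_of_nonneg (gaussianPDFReal_nonneg 0 v z)]
        · rw [if_neg h, zero_mul, abs_zero]; exact gaussianPDFReal_nonneg 0 v z)
  have hm2 : Integrable (fun z : ℝ => (if z < s then (1:ℝ) else 0) * gaussianPDFReal 0 v z) :=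
    (integrable_gaussianPDFReal 0 v).mono'
      ((Measurable.ite measurableSet_Iio measurable_const measurable_const).mul
        (measurable_gaussianPDFReal 0 v)).aestronglyMeasurable
      (Filter.Eventually.of_forall fun z => by
        rw [Real.norm_eq_abs]
        by_cases h : z < s
        · rw [if_pos h, one_mul, abs_of_nonneg (gaussianPDFReal_nonneg 0 v z)]
        · rw [if_neg h, zero_mul, abs_zero]; exact gaussianPDFReal_nonneg 0 v z)
  rw [← integral_add hm1 hm2]
  have hae : ∀ᵐ z : ℝ, z ≠ s := by
    rw [ae_iff]
    have : {z : ℝ | ¬ z ≠ s} = {s} := by ext z; simp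
    rw [this]
    exact Real.volume_singleton
  have hcongr : (fun z : ℝ => (if s < z then (1:ℝ) else 0) * gaussianPDFReal 0 v z
      + (if z < s then (1:ℝ) else 0) * gaussianPDFReal 0 v z)
      =ᵐ[volume] fun z => gaussianPDFReal 0 v z := by
    filter_upwards [hae] with z hz
    rcases lt_or_gt_of_ne hz with h | h
    · rw [if_neg (by linarith), if_pos h]; ring
    · rw [if_pos h, if_neg (by linarith)]; ring
  rw [integral_congr_ae hcongr]
  exact integral_gaussianPDFReal_eq_one 0 hvne

end Stmt9


open Stmt9 in
/-- Martingale/supermartingale structure of the reflecting and killing product weights: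
with respect to the filtration `(F_i)`, the process `(M̄_i)` is a martingale (in particular
`E[M̄_n] = 1`), while the process `(M_i)` is a supermartingale. -/
theorem stmt_9 (L T c : ℝ) (hT : 0 < T) (hc : 0 < c)
    (n : ℕ) (hn : 1 ≤ n) (Δ : ℝ) (hΔ : Δ = T / n)
    (σ : ℝ → ℝ) (hσ2 : ContDiff ℝ 2 σ)
    (hσb : ∃ C, ∀ z, |σ z| ≤ C) (hσ'b : ∃ C, ∀ z, |deriv σ z| ≤ C)
    (hσ''b : ∃ C, ∀ z, |deriv (deriv σ) z| ≤ C)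
    (hσc : ∀ z, c ≤ σ z)
    {Ω : Type*} [MeasurableSpace Ω] (μ : Measure Ω) [IsProbabilityMeasure μ]
    (Z U : ℕ → Ω → ℝ) (hZm : ∀ i, Measurable (Z i)) (hUm : ∀ i, Measurable (U i))
    (hlaw : μ.map (fun ω => fun i : Fin n => (Z (i.1 + 1) ω, U (i.1 + 1) ω))
        = Measure.pi fun _ : Fin n => stepLaw Δ)
    (x : ℝ) (hx : L ≤ x)
    (X : ℕ → Ω → ℝ) (hX0 : ∀ ω, X 0 ω = x)
    (hXrec : ∀ i ω, X (i + 1) ω = X i ω + σ (X i ω) * Z (i + 1) ω)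
    (p : ℕ → Ω → ℝ)
    (hp : ∀ i ω, p (i + 1) ω
      = Real.exp (-2 * (X i ω - L) * (X (i + 1) ω - L) / (σ (X i ω) ^ 2 * Δ)))
    (mker mbar : ℕ → Ω → ℝ)
    (hm : ∀ i ω, mker (i + 1) ω
      = (if L < X (i + 1) ω then (1 : ℝ) else 0)
          * (if p (i + 1) ω < U (i + 1) ω then 1 else 0))
    (hmb : ∀ i ω, mbar (i + 1) ω
      = (if L < X (i + 1) ω then (1 : ℝ) else 0)
          * (1 + if U (i + 1) ω ≤ p (i + 1) ω then 1 else 0))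
    (M Mb : ℕ → Ω → ℝ)
    (hM : ∀ i ω, M i ω = ∏ j ∈ Finset.range i, mker (j + 1) ω)
    (hMb : ∀ i ω, Mb i ω = ∏ j ∈ Finset.range i, mbar (j + 1) ω)
    (F : ℕ → MeasurableSpace Ω)
    (hF : ∀ i, F i = MeasurableSpace.comap
        (fun ω => fun j : Fin i => (Z (j.1 + 1) ω, U (j.1 + 1) ω)) inferInstance) :
    (∀ i ≤ n, Integrable (Mb i) μ)
      ∧ (∀ i ≤ n, Measurable[F i] (Mb i))
      ∧ (∫ ω, Mb n ω ∂μ = 1)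
      ∧ (∀ i < n, μ[Mb (i + 1)|F i] =ᵐ[μ] Mb i)
      ∧ (∀ i ≤ n, Integrable (M i) μ)
      ∧ (∀ i ≤ n, Measurable[F i] (M i))
      ∧ (∀ i < n, μ[M (i + 1)|F i] ≤ᵐ[μ] M i) := by
  classical
  have hΔpos : 0 < Δ := by
    rw [hΔ]
    apply div_pos hT
    exact_mod_cast Nat.pos_of_ne_zero (by omega)
  have hσpos : ∀ z, 0 < σ z := fun z => lt_of_lt_of_le hc (hσc z)
  have hσm : Measurable σ := (hσ2.continuous).measurable
  -- coordinate maps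
  set πm : (i : ℕ) → Ω → (Fin i → ℝ × ℝ) :=
    fun i ω j => (Z (j.1 + 1) ω, U (j.1 + 1) ω) with hπm
  have hπmeas : ∀ i, Measurable (πm i) :=
    fun i => measurable_pi_iff.2 fun j => ((hZm _).prodMk (hUm _))
  have hFle : ∀ i, F i ≤ ‹MeasurableSpace Ω› := fun i => (hF i) ▸ (hπmeas i).comap_le
  have hπF : ∀ i, Measurable[F i] (πm i) := fun i => by
    rw [hF i]; exact measurable_iff_comap_le.mpr le_rfl
  -- composition identities
  have hrestr : ∀ i ω, (πm (i+1) ω) ∘ Fin.castSucc = πm i ω := fun i ω => rfl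
  have hXg : ∀ i ω, X i ω = Stmt9.g x σ i (πm i ω) := by
    intro i
    induction i with
    | zero => intro ω; rw [hX0]; rfl
    | succ i ih =>
      intro ω
      rw [hXrec i ω, ih ω]
      show _ = Stmt9.g x σ i ((πm (i+1) ω) ∘ Fin.castSucc)
          + σ (Stmt9.g x σ i ((πm (i+1) ω) ∘ Fin.castSucc)) * ((πm (i+1) ω) (Fin.last i)).1
      rw [hrestr i ω]
      rfl
  have hmbar : ∀ i ω, mbar (i+1) ω = stepb L Δ σ (X i ω) (Z (i + 1) ω, U (i + 1) ω) := by
    intro i ω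
    rw [hmb i ω, hp i ω]
    show _ = (if L < X i ω + σ (X i ω) * Z (i+1) ω then (1:ℝ) else 0)
        * (1 + if U (i+1) ω ≤ pf L Δ σ (X i ω) (Z (i+1) ω) then 1 else 0)
    rw [pf, ← hXrec i ω]
  have hmker : ∀ i ω, mker (i+1) ω = stepk L Δ σ (X i ω) (Z (i + 1) ω, U (i + 1) ω) := by
    intro i ω
    rw [hm i ω, hp i ω]
    show _ = (if L < X i ω + σ (X i ω) * Z (i+1) ω then (1:ℝ) else 0)
        * (if pf L Δ σ (X i ω) (Z (i+1) ω) < U (i+1) ω then 1 else 0)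
    rw [pf, ← hXrec i ω]
  have hMbG : ∀ i ω, Mb i ω = Stmt9.G x σ (stepb L Δ σ) i (πm i ω) := by
    intro i
    induction i with
    | zero => intro ω; rw [hMb]; simp; rfl
    | succ i ih =>
      intro ω
      rw [hMb (i+1) ω, Finset.prod_range_succ, ← hMb i ω, ih ω, hmbar i ω, hXg i ω]
      show _ = Stmt9.G x σ _ i ((πm (i+1) ω) ∘ Fin.castSucc)
          * stepb L Δ σ (Stmt9.g x σ i ((πm (i+1) ω) ∘ Fin.castSucc)) ((πm (i+1) ω) (Fin.last i))
      rw [hrestr i ω]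
      rfl
  have hMG : ∀ i ω, M i ω = Stmt9.G x σ (stepk L Δ σ) i (πm i ω) := by
    intro i
    induction i with
    | zero => intro ω; rw [hM]; simp; rfl
    | succ i ih =>
      intro ω
      rw [hM (i+1) ω, Finset.prod_range_succ, ← hM i ω, ih ω, hmker i ω, hXg i ω]
      show _ = Stmt9.G x σ _ i ((πm (i+1) ω) ∘ Fin.castSucc)
          * stepk L Δ σ (Stmt9.g x σ i ((πm (i+1) ω) ∘ Fin.castSucc)) ((πm (i+1) ω) (Fin.last i))
      rw [hrestr i ω]
      rfl
  -- measurability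
  have hMbFmeas : ∀ i, Measurable[F i] (Mb i) := by
    intro i
    have h : Mb i = (Stmt9.G x σ (stepb L Δ σ) i) ∘ (πm i) := funext fun ω => hMbG i ω
    rw [h]
    exact (measurable_G hσm (measurable_stepb hσm) i).comp (hπF i)
  have hMFmeas : ∀ i, Measurable[F i] (M i) := by
    intro i
    have h : M i = (Stmt9.G x σ (stepk L Δ σ) i) ∘ (πm i) := funext fun ω => hMG i ω
    rw [h]
    exact (measurable_G hσm (measurable_stepk hσm) i).comp (hπF i)
  -- bounds and integrability
  have hMbbound : ∀ i ω, |Mb i ω| ≤ 2 ^ i := by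
    intro i ω
    rw [hMbG i ω, abs_of_nonneg (G_nonneg (fun y ζ => stepb_nonneg y ζ) i _)]
    exact G_le (fun y ζ => stepb_nonneg y ζ) (fun y ζ => stepb_le_two y ζ) i _
  have hMbound : ∀ i ω, |M i ω| ≤ 1 := by
    intro i ω
    rw [hMG i ω, abs_of_nonneg (G_nonneg (fun y ζ => stepk_nonneg y ζ) i _)]
    calc Stmt9.G x σ (stepk L Δ σ) i (πm i ω) ≤ 1 ^ i :=
          G_le (fun y ζ => stepk_nonneg y ζ) (fun y ζ => stepk_le_one y ζ) i _
      _ = 1 := one_pow i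
  have hMbint : ∀ i, Integrable (Mb i) μ := fun i =>
    (integrable_const ((2:ℝ) ^ i)).mono' ((hMbFmeas i).mono (hFle i) le_rfl).aestronglyMeasurable
      (Filter.Eventually.of_forall fun ω => by rw [Real.norm_eq_abs]; exact hMbbound i ω)
  have hMint : ∀ i, Integrable (M i) μ := fun i =>
    (integrable_const (1:ℝ)).mono' ((hMFmeas i).mono (hFle i) le_rfl).aestronglyMeasurable
      (Filter.Eventually.of_forall fun ω => by rw [Real.norm_eq_abs]; exact hMbound i ω)
  obtain ⟨m, rfl⟩ : ∃ m, n = m + 1 := ⟨n - 1, (Nat.succ_pred_eq_of_pos hn).symm⟩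
  -- the martingale property
  have hcond : ∀ i < m + 1, Mb i =ᵐ[μ] μ[Mb (i+1)|F i] := by
    intro i hi
    refine ae_eq_condExp_of_forall_setIntegral_eq (hFle i) (hMbint (i+1))
      (fun s _ _ => (hMbint i).integrableOn) ?_
      (((hMbFmeas i).stronglyMeasurable).aestronglyMeasurable)
    intro s hs _
    rw [hF i] at hs
    obtain ⟨A, hA, rfl⟩ := hs
    have him : i ≤ m := Nat.lt_succ_iff.mp hi
    have hin : i ≤ m + 1 := hi.le
    set idx : Fin (m+1) := ⟨i, hi⟩ with hidx
    set res : (Fin (m+1) → ℝ × ℝ) → (Fin i → ℝ × ℝ) := fun f j => f (Fin.castLE hin j) with hres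
    set res' : (Fin m → ℝ × ℝ) → (Fin i → ℝ × ℝ) := fun v j => v (Fin.castLE him j) with hres'
    have hres_meas : Measurable res := measurable_pi_iff.2 fun j => measurable_pi_apply _
    have hres'_meas : Measurable res' := measurable_pi_iff.2 fun j => measurable_pi_apply _
    have hres_pi : ∀ ω, res (πm (m+1) ω) = πm i ω := fun ω => rfl
    set indA : (Fin i → ℝ × ℝ) → ℝ := fun v => Set.indicator A (fun _ => (1:ℝ)) v with hindA
    have hindA_meas : Measurable indA := (measurable_const).indicator hA
    set K1 : (Fin (m+1) → ℝ × ℝ) → ℝ := fun f =>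
      indA (res f) * Stmt9.G x σ (stepb L Δ σ) i (res f)
        * stepb L Δ σ (Stmt9.g x σ i (res f)) (f idx) with hK1
    set K2 : (Fin (m+1) → ℝ × ℝ) → ℝ := fun f =>
      indA (res f) * Stmt9.G x σ (stepb L Δ σ) i (res f) with hK2
    have hK1_meas : Measurable K1 :=
      ((hindA_meas.comp hres_meas).mul ((measurable_G hσm (measurable_stepb hσm) i).comp
        hres_meas)).mul ((measurable_stepb hσm).comp
          (((measurable_g hσm i).comp hres_meas).prodMk (measurable_pi_apply idx)))
    have hK2_meas : Measurable K2 :=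
      (hindA_meas.comp hres_meas).mul ((measurable_G hσm (measurable_stepb hσm) i).comp hres_meas)
    have hsmeas : MeasurableSet ((πm i) ⁻¹' A) := hπmeas i hA
    -- rewrite both set integrals as integrals of K1/K2 against the product law
    have hleft : ∫ ω in (πm i) ⁻¹' A, Mb (i+1) ω ∂μ = ∫ ω, K1 (πm (m+1) ω) ∂μ := by
      rw [← integral_indicator hsmeas]
      congr 1
      funext ω
      by_cases hω : πm i ω ∈ A
      · rw [Set.indicator_of_mem (by exact hω)]
        have hsucc : Mb (i+1) ω = Mb i ω * mbar (i+1) ω := by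
          rw [hMb (i+1) ω, Finset.prod_range_succ, ← hMb i ω]
        rw [hsucc, hMbG i ω, hmbar i ω, hXg i ω, hK1]
        simp only [hres_pi ω]
        simp only [hindA]
        rw [Set.indicator_of_mem hω]
        show _ = 1 * Stmt9.G x σ (stepb L Δ σ) i (πm i ω)
            * stepb L Δ σ (Stmt9.g x σ i (πm i ω)) (πm (m+1) ω idx)
        have : πm (m+1) ω idx = (Z (i+1) ω, U (i+1) ω) := rfl
        rw [this]
        ring
      · rw [Set.indicator_of_notMem (by exact hω), hK1]
        simp only [hres_pi ω]
        simp only [hindA]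
        rw [Set.indicator_of_notMem hω]
        ring
    have hright : ∫ ω in (πm i) ⁻¹' A, Mb i ω ∂μ = ∫ ω, K2 (πm (m+1) ω) ∂μ := by
      rw [← integral_indicator hsmeas]
      congr 1
      funext ω
      by_cases hω : πm i ω ∈ A
      · rw [Set.indicator_of_mem (by exact hω), hMbG i ω, hK2]
        simp only [hres_pi ω]
        simp only [hindA]
        rw [Set.indicator_of_mem hω, one_mul]
      · rw [Set.indicator_of_notMem (by exact hω), hK2]
        simp only [hres_pi ω]
        simp only [hindA]
        rw [Set.indicator_of_notMem hω, zero_mul]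
    rw [hleft, hright]
    -- move to the canonical space
    have hmap1 : ∫ ω, K1 (πm (m+1) ω) ∂μ
        = ∫ f, K1 f ∂(Measure.pi fun _ : Fin (m+1) => stepLaw Δ) := by
      rw [← hlaw, integral_map (hπmeas (m+1)).aemeasurable hK1_meas.aestronglyMeasurable]
    have hmap2 : ∫ ω, K2 (πm (m+1) ω) ∂μ
        = ∫ f, K2 f ∂(Measure.pi fun _ : Fin (m+1) => stepLaw Δ) := by
      rw [← hlaw, integral_map (hπmeas (m+1)).aemeasurable hK2_meas.aestronglyMeasurable]
    rw [hmap1, hmap2]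
    -- split off coordinate idx
    have hmp := measurePreserving_piFinSuccAbove (fun _ : Fin (m+1) => stepLaw Δ) idx
    set W1 : (ℝ × ℝ) × (Fin m → ℝ × ℝ) → ℝ := fun q =>
      indA (res' q.2) * Stmt9.G x σ (stepb L Δ σ) i (res' q.2)
        * stepb L Δ σ (Stmt9.g x σ i (res' q.2)) q.1 with hW1
    set W2 : (ℝ × ℝ) × (Fin m → ℝ × ℝ) → ℝ := fun q =>
      indA (res' q.2) * Stmt9.G x σ (stepb L Δ σ) i (res' q.2) with hW2
    have hW1_meas : Measurable W1 :=
      ((hindA_meas.comp (hres'_meas.comp measurable_snd)).mul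
        ((measurable_G hσm (measurable_stepb hσm) i).comp
          (hres'_meas.comp measurable_snd))).mul ((measurable_stepb hσm).comp
            (((measurable_g hσm i).comp (hres'_meas.comp measurable_snd)).prodMk measurable_fst))
    have hW2_meas : Measurable W2 :=
      (hindA_meas.comp (hres'_meas.comp measurable_snd)).mul
        ((measurable_G hσm (measurable_stepb hσm) i).comp (hres'_meas.comp measurable_snd))
    have hresres : ∀ f : Fin (m+1) → ℝ × ℝ, res' (fun j => f (idx.succAbove j)) = res f := by
      intro f
      funext j
      show f (idx.succAbove (Fin.castLE him j)) = f (Fin.castLE hin j)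
      congr 1
      rw [Fin.succAbove_of_castSucc_lt]
      · ext; simp
      · rw [Fin.lt_def]
        exact j.2
    have hEapp : ∀ f : Fin (m+1) → ℝ × ℝ,
        (MeasurableEquiv.piFinSuccAbove (fun _ : Fin (m+1) => ℝ × ℝ) idx) f
          = (f idx, fun j => f (idx.succAbove j)) := by
      intro f
      simp only [MeasurableEquiv.piFinSuccAbove, MeasurableEquiv.coe_mk,
        Fin.insertNthEquiv, Equiv.coe_fn_symm_mk]
      rfl
    have hK1W : ∀ f, K1 f = W1 ((MeasurableEquiv.piFinSuccAbove (fun _ : Fin (m+1) => ℝ × ℝ) idx) f) := by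
      intro f
      rw [hEapp f, hK1, hW1]
      simp only
      rw [hresres f]
    have hK2W : ∀ f, K2 f = W2 ((MeasurableEquiv.piFinSuccAbove (fun _ : Fin (m+1) => ℝ × ℝ) idx) f) := by
      intro f
      rw [hEapp f, hK2, hW2]
      simp only
      rw [hresres f]
    rw [integral_congr_ae (Filter.Eventually.of_forall hK1W),
      integral_congr_ae (Filter.Eventually.of_forall hK2W)]
    rw [hmp.integral_comp' W1, hmp.integral_comp' W2]
    -- Fubini
    have hGabs : ∀ v : Fin i → ℝ × ℝ, |Stmt9.G x σ (stepb L Δ σ) i v| ≤ 2 ^ i := by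
      intro v
      rw [abs_of_nonneg (G_nonneg (fun y ζ => stepb_nonneg y ζ) i _)]
      exact G_le (fun y ζ => stepb_nonneg y ζ) (fun y ζ => stepb_le_two y ζ) i _
    have hindabs : ∀ v, |indA v| ≤ 1 := by
      intro v
      simp only [hindA]
      by_cases hv : v ∈ A
      · rw [Set.indicator_of_mem hv]; norm_num
      · rw [Set.indicator_of_notMem hv]; norm_num
    have hW1_int : Integrable W1
        ((stepLaw Δ).prod (Measure.pi fun _ : Fin m => stepLaw Δ)) := by
      refine (integrable_const ((2:ℝ)^i * 2)).mono' hW1_meas.aestronglyMeasurable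
        (Filter.Eventually.of_forall fun q => ?_)
      rw [Real.norm_eq_abs, hW1]
      simp only
      rw [abs_mul, abs_mul]
      calc |indA (res' q.2)| * |Stmt9.G x σ (stepb L Δ σ) i (res' q.2)|
            * |stepb L Δ σ (Stmt9.g x σ i (res' q.2)) q.1|
          ≤ (1 * 2^i) * 2 := by
            apply mul_le_mul (mul_le_mul (hindabs _) (hGabs _) (abs_nonneg _) zero_le_one)
            · rw [abs_of_nonneg (stepb_nonneg _ _)]; exact stepb_le_two _ _
            · exact abs_nonneg _
            · positivity
        _ = 2^i * 2 := by rw [one_mul]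
    have hW2_int : Integrable W2
        ((stepLaw Δ).prod (Measure.pi fun _ : Fin m => stepLaw Δ)) := by
      refine (integrable_const ((2:ℝ)^i)).mono' hW2_meas.aestronglyMeasurable
        (Filter.Eventually.of_forall fun q => ?_)
      rw [Real.norm_eq_abs, hW2]
      simp only
      rw [abs_mul]
      calc |indA (res' q.2)| * |Stmt9.G x σ (stepb L Δ σ) i (res' q.2)|
          ≤ 1 * 2^i := mul_le_mul (hindabs _) (hGabs _) (abs_nonneg _) zero_le_one
        _ = 2^i := one_mul _
    rw [integral_prod_symm W1 hW1_int, integral_prod_symm W2 hW2_int]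
    -- the inner integrals agree
    refine integral_congr_ae (Filter.Eventually.of_forall fun v => ?_)
    have hkey : ∫ z, W1 (z, v) ∂(stepLaw Δ) = ∫ z, W2 (z, v) ∂(stepLaw Δ) := by
      rw [hW1, hW2]
      simp only
      rw [integral_const_mul]
      by_cases hG : Stmt9.G x σ (stepb L Δ σ) i (res' v) = 0
      · rw [hG]
        simp
      · have hyL : L ≤ Stmt9.g x σ i (res' v) := le_g_of_G_ne_zero hx i _ hG
        rw [integral_stepb hΔpos hσm hσpos hyL, mul_one, integral_const]
        simp [measure_univ]
    exact hkey.symm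
  -- expectation of Mb n
  have hE : ∀ i, i ≤ m + 1 → ∫ ω, Mb i ω ∂μ = 1 := by
    intro i
    induction i with
    | zero =>
      intro _
      have h0 : Mb 0 = fun _ => (1:ℝ) := funext fun ω => by rw [hMb]; simp
      rw [h0, integral_const]
      simp [measure_univ]
    | succ i ih =>
      intro hi1
      have hi : i < m + 1 := Nat.lt_of_succ_le hi1
      have h1 : ∫ ω, Mb (i+1) ω ∂μ = ∫ ω, (μ[Mb (i+1)|F i]) ω ∂μ :=
        (integral_condExp (hFle i)).symm
      rw [h1, integral_congr_ae (hcond i hi).symm, ih hi.le]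
  -- supermartingale part
  have hsuper : ∀ i < m + 1, μ[M (i+1)|F i] ≤ᵐ[μ] M i := by
    intro i hi
    have hle : M (i+1) ≤ᵐ[μ] M i := by
      apply Filter.Eventually.of_forall
      intro ω
      have hsucc : M (i+1) ω = M i ω * mker (i+1) ω := by
        rw [hM (i+1) ω, Finset.prod_range_succ, ← hM i ω]
      rw [hsucc]
      apply mul_le_of_le_one_right
      · rw [hMG i ω]; exact G_nonneg (fun y ζ => stepk_nonneg y ζ) i _
      · rw [hmker i ω]; exact stepk_le_one _ _
    have h1 := condExp_mono (m := F i) (hMint (i+1)) (hMint i) hle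
    have h2 : μ[M i|F i] = M i :=
      condExp_of_stronglyMeasurable (hFle i) ((hMFmeas i).stronglyMeasurable) (hMint i)
    rw [h2] at h1
    exact h1
  exact ⟨fun i _ => hMbint i, fun i _ => hMbFmeas i, hE (m+1) le_rfl,
    fun i hi => (hcond i hi).symm, fun i _ => hMint i, fun i _ => hMFmeas i, hsuper⟩
end

section
/- Derivative representation for the killed Brownian semigroup via the reflected kernel: let f : [L,∞) → ℝ be continuously differentiable with f and f′ bounded and f(L) = 0. Then for every t > 0 the map x ↦ ∫_L^∞ f(y)·q⁻_t(x, y) dy is differentiable on [L,∞) (one-sidedly at x = L), and for every x ≥ L its derivative equals ∫_L^∞ f′(y)·q⁺_t(x, y) dy, which in turn equals ∫_ℝ f′(L + |x − L + w|)·g_t(w) dw (i.e. the expectation of f′ evaluated at Brownian motion started at x and reflected at L). -/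
open Real MeasureTheory Set


private lemma shift_Ioi (c a : ℝ) (f : ℝ → ℝ) :
    (∫ x in Set.Ioi c, f (x + a)) = ∫ x in Set.Ioi (c + a), f x := by
  have A : MeasurableEmbedding fun x : ℝ => x + a :=
    (Homeomorph.addRight a).isClosedEmbedding.measurableEmbedding
  have h := A.setIntegral_map (μ := volume) f (Set.Ioi (c + a))
  rw [map_add_right_eq_self, preimage_add_const_Ioi, add_sub_cancel_right] at h
  exact h.symm

private lemma key_eq (L a ε : ℝ) (h g φ : ℝ → ℝ)
    (hgi : Integrable g) (hge : ∀ z, g (-z) = g z)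
    (hφc : Continuous φ) (hφb : ∃ C, ∀ u, |φ u| ≤ C)
    (hhc : Continuous h) (hhb : ∃ C, ∀ z, |h z| ≤ C)
    (hφpos : ∀ u, 0 ≤ u → φ u = h (L + u))
    (hφneg : ∀ u, u ≤ 0 → φ u = ε * h (L - u)) :
    (∫ w : ℝ, φ (a + w) * g w)
      = ∫ y in Set.Ioi L, h y * (g (y - L - a) + ε * g (y - L + a)) := by
  have hgia : Integrable (fun w => g (w - a)) := hgi.comp_sub_right a
  have hφb' : ∃ C, ∀ u : ℝ, ‖φ u‖ ≤ C := by
    obtain ⟨C, hC⟩ := hφb; exact ⟨C, fun u => by simpa using hC u⟩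
  have hint : Integrable (fun w => φ w * g (w - a)) :=
    by obtain ⟨C, hC⟩ := hφb'; exact hgia.bdd_mul hφc.aestronglyMeasurable (Filter.Eventually.of_forall hC)
  have h1 : (∫ w : ℝ, φ (a + w) * g w) = ∫ w : ℝ, φ w * g (w - a) := by
    have e : (fun w : ℝ => φ (a + w) * g w)
        = fun w => (fun v => φ v * g (v - a)) (w + a) := by
      funext w; simp [add_comm a w]
    rw [e, integral_add_right_eq_self (fun v => φ v * g (v - a)) a]
  have h2 : (∫ w : ℝ, φ w * g (w - a))
      = (∫ w in Iic (0:ℝ), φ w * g (w - a)) + ∫ w in Ioi (0:ℝ), φ w * g (w - a) :=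
    (intervalIntegral.integral_Iic_add_Ioi hint.integrableOn hint.integrableOn).symm
  have h3 : (∫ w in Iic (0:ℝ), φ w * g (w - a))
      = ∫ w in Ioi (0:ℝ), ε * h (L + w) * g (w + a) := by
    have e1 : (∫ w in Iic (0:ℝ), φ w * g (w - a))
        = ∫ w in Iic (0:ℝ), (fun v => ε * h (L + v) * g (v + a)) (-w) := by
      apply setIntegral_congr_fun measurableSet_Iic
      intro w hw
      simp only
      rw [hφneg w hw, show L - w = L + -w by ring, show w - a = -(-w + a) by ring, hge]
    rw [e1, integral_comp_neg_Iic (0:ℝ) (fun v => ε * h (L + v) * g (v + a))]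
    norm_num
  have h4 : (∫ w in Ioi (0:ℝ), φ w * g (w - a))
      = ∫ w in Ioi (0:ℝ), h (L + w) * g (w - a) :=
    setIntegral_congr_fun measurableSet_Ioi fun w hw => by
      rw [hφpos w (le_of_lt hw)]
  have hhb' : ∃ C, ∀ u : ℝ, ‖h (L + u)‖ ≤ C := by
    obtain ⟨C, hC⟩ := hhb; exact ⟨C, fun u => by simpa using hC (L + u)⟩
  have hint1 : Integrable (fun w => h (L + w) * g (w - a)) :=
    by obtain ⟨C, hC⟩ := hhb'; exact hgia.bdd_mul (hhc.comp (continuous_const.add continuous_id)).aestronglyMeasurable (Filter.Eventually.of_forall hC)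
  have hint2 : Integrable (fun w => ε * h (L + w) * g (w + a)) := by
    obtain ⟨C, hC⟩ := hhb'
    have := (hgi.comp_add_right a).bdd_mul
      (hhc.comp (continuous_const.add continuous_id)).aestronglyMeasurable (Filter.Eventually.of_forall hC)
    have e : (fun w : ℝ => ε * h (L + w) * g (w + a))
        = fun w => ε * (h (L + w) * g (w + a)) := by funext w; ring
    rw [e]; exact this.const_mul ε
  have h5 : (∫ w in Ioi (0:ℝ), ε * h (L + w) * g (w + a))
        + (∫ w in Ioi (0:ℝ), h (L + w) * g (w - a))
      = ∫ w in Ioi (0:ℝ), h (L + w) * (g (w - a) + ε * g (w + a)) := by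
    rw [← integral_add hint2.integrableOn hint1.integrableOn]
    apply setIntegral_congr_fun measurableSet_Ioi
    intro w _; simp only; ring
  have h6 : (∫ w in Ioi (0:ℝ), h (L + w) * (g (w - a) + ε * g (w + a)))
      = ∫ y in Set.Ioi L, h y * (g (y - L - a) + ε * g (y - L + a)) := by
    have e := shift_Ioi 0 L (fun y => h y * (g (y - L - a) + ε * g (y - L + a)))
    rw [zero_add] at e
    rw [← e]
    apply setIntegral_congr_fun measurableSet_Ioi
    intro w _
    simp only
    rw [show w + L - L - a = w - a by ring, show w + L - L + a = w + a by ring, add_comm w L]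
  rw [h1, h2, h3, h4, h5, h6]

/-- Derivative representation for the killed Brownian semigroup via the reflected kernel:
for `f ∈ C¹_b` with `f(L) = 0`, the map `x ↦ ∫_L^∞ f(y) q⁻ₜ(x,y) dy` is differentiable on
`[L,∞)` (one-sidedly at `x = L`) with derivative `∫_L^∞ f'(y) q⁺ₜ(x,y) dy`, which equals the
expectation of `f'` at Brownian motion started at `x` and reflected at `L`. -/
theorem stmt_18 (L t : ℝ) (ht : 0 < t)
    (g : ℝ → ℝ)
    (hg : ∀ z, g z = (1 / Real.sqrt (2 * Real.pi * t)) * Real.exp (-z ^ 2 / (2 * t)))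
    (f : ℝ → ℝ) (hf : ContDiff ℝ 1 f)
    (hfb : ∃ C, ∀ z, |f z| ≤ C) (hf'b : ∃ C, ∀ z, |deriv f z| ≤ C)
    (hfL : f L = 0)
    (x : ℝ) (hx : L ≤ x) :
    HasDerivWithinAt
        (fun x' => ∫ y in Set.Ioi L, f y * (g (y - x') - g (y + x' - 2 * L)))
        (∫ y in Set.Ioi L, deriv f y * (g (y - x) + g (y + x - 2 * L)))
        (Set.Ici L) x
      ∧ (∫ y in Set.Ioi L, deriv f y * (g (y - x) + g (y + x - 2 * L)))
        = ∫ w : ℝ, deriv f (L + |x - L + w|) * g w := by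
  -- g facts
  have hgeq : g = fun z => (1 / Real.sqrt (2 * Real.pi * t)) * Real.exp (-z ^ 2 / (2 * t)) :=
    funext hg
  have hgc : Continuous g := by rw [hgeq]; fun_prop
  have hgeq2 : g = fun z => (1 / Real.sqrt (2 * Real.pi * t)) * Real.exp (-(1 / (2 * t)) * z ^ 2) :=
    funext fun z => by
      rw [hg]
      have e : -z ^ 2 / (2 * t) = -(1 / (2 * t)) * z ^ 2 := by ring
      rw [e]
  have hgi : Integrable g := by
    rw [hgeq2]
    exact (integrable_exp_neg_mul_sq (by positivity : (0:ℝ) < 1 / (2 * t))).const_mul _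
  have hge : ∀ z, g (-z) = g z := fun z => by rw [hg, hg]; norm_num
  have hgnn : ∀ z, 0 ≤ g z := fun z => by rw [hg]; positivity
  -- f facts
  obtain ⟨Cf, hCf⟩ := hfb
  obtain ⟨C, hC⟩ := hf'b
  have hfc : Continuous f := hf.continuous
  have hd : Differentiable ℝ f := hf.differentiable one_ne_zero
  have hf'c : Continuous (deriv f) := hf.continuous_deriv le_rfl
  -- φ₁
  set φ₁ : ℝ → ℝ := fun u => ∫ s in (0:ℝ)..u, deriv f (L + |s|) with hφ₁def
  have hkc : Continuous fun s : ℝ => deriv f (L + |s|) :=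
    hf'c.comp (continuous_const.add continuous_abs)
  have hφ₁deriv : ∀ u : ℝ, HasDerivAt φ₁ (deriv f (L + |u|)) u := fun u =>
    intervalIntegral.integral_hasDerivAt_right (hkc.intervalIntegrable _ _)
      (hkc.stronglyMeasurable.stronglyMeasurableAtFilter) hkc.continuousAt
  have hφ₁diff : Differentiable ℝ φ₁ := fun u => (hφ₁deriv u).differentiableAt
  have hφ₁c : Continuous φ₁ := hφ₁diff.continuous
  have hφ₁pos : ∀ u : ℝ, 0 ≤ u → φ₁ u = f (L + u) := by
    intro u hu
    have e1 : φ₁ u = ∫ s in (0:ℝ)..u, deriv f (L + s) := by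
      apply intervalIntegral.integral_congr
      intro s hs
      rw [Set.uIcc_of_le hu] at hs
      show deriv f (L + |s|) = deriv f (L + s)
      rw [abs_of_nonneg hs.1]
    rw [e1, intervalIntegral.integral_comp_add_left (fun y => deriv f y) L, add_zero,
      intervalIntegral.integral_deriv_eq_sub (fun y _ => hd y)
        (hf'c.intervalIntegrable _ _), hfL, sub_zero]
  have hφ₁neg : ∀ u : ℝ, u ≤ 0 → φ₁ u = (-1) * f (L - u) := by
    intro u hu
    have e1 : φ₁ u = ∫ s in (0:ℝ)..u, (fun v => deriv f (L + |v|)) (-s) := by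
      apply intervalIntegral.integral_congr
      intro s _
      show deriv f (L + |s|) = deriv f (L + |(-s)|)
      rw [abs_neg]
    rw [e1, intervalIntegral.integral_comp_neg (fun v => deriv f (L + |v|)), neg_zero,
      intervalIntegral.integral_symm]
    have : φ₁ (-u) = f (L + -u) := hφ₁pos (-u) (neg_nonneg.2 hu)
    rw [hφ₁def] at this
    simp only at this
    rw [this, show L + -u = L - u by ring]
    ring
  have hφ₁b : ∀ u : ℝ, |φ₁ u| ≤ Cf := by
    intro u
    rcases le_total 0 u with h' | h'
    · rw [hφ₁pos u h']; exact hCf _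
    · rw [hφ₁neg u h']; simpa using hCf (L - u)
  -- φ₂
  have hφ₂pos : ∀ u : ℝ, 0 ≤ u → (fun u : ℝ => deriv f (L + |u|)) u = deriv f (L + u) := by
    intro u hu
    show deriv f (L + |u|) = deriv f (L + u)
    rw [abs_of_nonneg hu]
  have hφ₂neg : ∀ u : ℝ, u ≤ 0 → (fun u : ℝ => deriv f (L + |u|)) u = 1 * deriv f (L - u) := by
    intro u hu
    show deriv f (L + |u|) = 1 * deriv f (L - u)
    rw [abs_of_nonpos hu, one_mul, sub_eq_add_neg]
  have hC0 : 0 ≤ C := (abs_nonneg _).trans (hC 0)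
  -- second conjunct
  have hsecond : (∫ y in Set.Ioi L, deriv f y * (g (y - x) + g (y + x - 2 * L)))
      = ∫ w : ℝ, deriv f (L + |x - L + w|) * g w := by
    have k2 : (∫ w : ℝ, deriv f (L + |x - L + w|) * g w)
        = ∫ y in Set.Ioi L, deriv f y * (g (y - L - (x - L)) + 1 * g (y - L + (x - L))) :=
      key_eq L (x - L) 1 (deriv f) g (fun u => deriv f (L + |u|)) hgi hge hkc
        ⟨C, fun u => hC _⟩ hf'c ⟨C, hC⟩ hφ₂pos hφ₂neg
    rw [k2]
    apply setIntegral_congr_fun measurableSet_Ioi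
    intro y _
    show deriv f y * (g (y - x) + g (y + x - 2 * L))
      = deriv f y * (g (y - L - (x - L)) + 1 * g (y - L + (x - L)))
    rw [show y - L - (x - L) = y - x by ring, show y - L + (x - L) = y + x - 2 * L by ring,
      one_mul]
  -- F = G on all of ℝ
  have hφ₁neg' : ∀ u : ℝ, u ≤ 0 → φ₁ u = (-1 : ℝ) * f (L - u) := hφ₁neg
  have hFG : ∀ x' : ℝ, (∫ y in Set.Ioi L, f y * (g (y - x') - g (y + x' - 2 * L)))
      = ∫ w : ℝ, φ₁ (x' - L + w) * g w := by
    intro x'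
    have k1 : (∫ w : ℝ, φ₁ (x' - L + w) * g w)
        = ∫ y in Set.Ioi L, f y * (g (y - L - (x' - L)) + (-1) * g (y - L + (x' - L))) :=
      key_eq L (x' - L) (-1) f g φ₁ hgi hge hφ₁c ⟨Cf, hφ₁b⟩ hfc ⟨Cf, hCf⟩ hφ₁pos hφ₁neg'
    rw [k1]
    apply setIntegral_congr_fun measurableSet_Ioi
    intro y _
    show f y * (g (y - x') - g (y + x' - 2 * L))
      = f y * (g (y - L - (x' - L)) + -1 * g (y - L + (x' - L)))
    rw [show y - L - (x' - L) = y - x' by ring, show y - L + (x' - L) = y + x' - 2 * L by ring]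
    ring
  -- derivative of G
  have hGderiv : HasDerivAt (fun x' : ℝ => ∫ w : ℝ, φ₁ (x' - L + w) * g w)
      (∫ w : ℝ, deriv f (L + |x - L + w|) * g w) x := by
    have main := hasDerivAt_integral_of_dominated_loc_of_deriv_le (μ := volume)
      (F := fun x' w => φ₁ (x' - L + w) * g w)
      (F' := fun x' w => deriv f (L + |x' - L + w|) * g w)
      (bound := fun w => C * g w) (x₀ := x) (s := Metric.ball x 1) (Metric.ball_mem_nhds x zero_lt_one)
      (Filter.Eventually.of_forall fun x' =>
        ((hφ₁c.comp (continuous_const.add continuous_id)).mul hgc).aestronglyMeasurable)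
      (hgi.bdd_mul (hφ₁c.comp (continuous_const.add continuous_id)).aestronglyMeasurable
        (c := Cf) (Filter.Eventually.of_forall fun w => by simpa using hφ₁b (x - L + w)))
      ((hkc.comp (continuous_const.add continuous_id)).mul hgc).aestronglyMeasurable
      (Filter.Eventually.of_forall fun w => fun x' _ => by
        rw [Real.norm_eq_abs, abs_mul, abs_of_nonneg (hgnn w)]
        exact mul_le_mul_of_nonneg_right (hC _) (hgnn w))
      (hgi.const_mul C)
      (Filter.Eventually.of_forall fun w => fun x' _ => by
        have hin : HasDerivAt (fun x' : ℝ => x' - L + w) 1 x' := by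
          simpa using ((hasDerivAt_id x').sub_const L).add_const w
        have h2 := (hφ₁deriv (x' - L + w)).comp x' hin
        simpa [Function.comp] using h2.mul_const (g w))
    exact main.2
  refine ⟨?_, hsecond⟩
  rw [hsecond]
  exact hGderiv.hasDerivWithinAt.congr (fun x' _ => hFG x') (hFG x)
end

section
/- Gaussian integration-by-parts identity for the Brownian crossing probability (identity (eq:refl)): let f : ℝ → ℝ be continuously differentiable with f and f′ bounded. Then for every t > 0 the map x ↦ ∫_ℝ f(x+w)·(1 − p_t(x, x+w))·g_t(w) dw is differentiable on ℝ and for every x its derivative equals ∫_ℝ f′(x+w)·(1 + p_t(x, x+w))·g_t(w) dw; in particular ∫_ℝ f(x+w)·∂_x[p_t(x, x+w)]·g_t(w) dw = −2·∫_ℝ f′(x+w)·p_t(x, x+w)·g_t(w) dw, where ∂_x[p_t(x, x+w)] is the derivative of x ↦ p_t(x, x+w) with w held fixed. -/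
open Real MeasureTheory
open Filter Set

section aux
variable {t : ℝ}

lemma gauss_eq (g : ℝ → ℝ)
    (hg : ∀ z, g z = (1 / Real.sqrt (2 * Real.pi * t)) * Real.exp (-z ^ 2 / (2 * t))) :
    g = fun z => (1 / Real.sqrt (2 * Real.pi * t)) * Real.exp (-z ^ 2 / (2 * t)) := funext hg

lemma gauss_cont (g : ℝ → ℝ)
    (hg : ∀ z, g z = (1 / Real.sqrt (2 * Real.pi * t)) * Real.exp (-z ^ 2 / (2 * t))) :
    Continuous g := by
  rw [gauss_eq g hg]; fun_prop

lemma gauss_nonneg (g : ℝ → ℝ)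
    (hg : ∀ z, g z = (1 / Real.sqrt (2 * Real.pi * t)) * Real.exp (-z ^ 2 / (2 * t))) (z : ℝ) :
    0 ≤ g z := by
  rw [hg z]; positivity

lemma gauss_integrable (ht : 0 < t) (g : ℝ → ℝ)
    (hg : ∀ z, g z = (1 / Real.sqrt (2 * Real.pi * t)) * Real.exp (-z ^ 2 / (2 * t))) :
    Integrable g := by
  rw [gauss_eq g hg]
  have h : ∀ z : ℝ, -z ^ 2 / (2 * t) = -(1 / (2 * t)) * z ^ 2 := by
    intro z; field_simp
  simp_rw [h]
  exact (integrable_exp_neg_mul_sq (by positivity)).const_mul _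

lemma gauss_moment (ht : 0 < t) (g : ℝ → ℝ)
    (hg : ∀ z, g z = (1 / Real.sqrt (2 * Real.pi * t)) * Real.exp (-z ^ 2 / (2 * t))) :
    Integrable (fun z => z * g z) := by
  have h : Integrable (fun z : ℝ => z ^ (1 : ℝ) * Real.exp (-(1 / (2 * t)) * z ^ 2)) :=
    integrable_rpow_mul_exp_neg_mul_sq (s := 1) (by positivity) (by norm_num)
  simp_rw [Real.rpow_one] at h
  have h2 := h.const_mul (1 / Real.sqrt (2 * Real.pi * t))
  have : (fun z => z * g z) = fun z : ℝ =>
      1 / Real.sqrt (2 * Real.pi * t) * (z * Real.exp (-(1 / (2 * t)) * z ^ 2)) := by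
    funext z
    rw [hg z]
    have hz : -z ^ 2 / (2 * t) = -(1 / (2 * t)) * z ^ 2 := by field_simp
    rw [hz]; ring
  rw [this]; exact h2

lemma gauss_hasDerivAt (ht : 0 < t) (g : ℝ → ℝ)
    (hg : ∀ z, g z = (1 / Real.sqrt (2 * Real.pi * t)) * Real.exp (-z ^ 2 / (2 * t))) (u : ℝ) :
    HasDerivAt g (-(u / t) * g u) u := by
  rw [gauss_eq g hg]
  have h1 : HasDerivAt (fun z : ℝ => -z ^ 2 / (2 * t)) (-(2 * u) / (2 * t)) u := by
    have := ((hasDerivAt_pow 2 u).neg).div_const (2 * t)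
    simpa using this
  have h2 := (h1.exp).const_mul (1 / Real.sqrt (2 * Real.pi * t))
  convert h2 using 1
  · rfl
  · rfl
  simp only []
  field_simp

lemma gauss_tendsto_top (ht : 0 < t) (g : ℝ → ℝ)
    (hg : ∀ z, g z = (1 / Real.sqrt (2 * Real.pi * t)) * Real.exp (-z ^ 2 / (2 * t))) :
    Tendsto g atTop (nhds 0) := by
  rw [gauss_eq g hg]
  rw [show (0:ℝ) = (1 / Real.sqrt (2 * Real.pi * t)) * 0 by ring]
  refine Tendsto.const_mul _ ?_
  refine Real.tendsto_exp_atBot.comp ?_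
  have : Tendsto (fun z : ℝ => z ^ 2 / (2 * t)) atTop atTop := by
    apply Tendsto.atTop_div_const (by positivity)
    exact tendsto_pow_atTop (by norm_num)
  have h2 := tendsto_neg_atBot_iff.mpr this
  refine h2.congr (fun z => by ring)

lemma gauss_tendsto_bot (ht : 0 < t) (g : ℝ → ℝ)
    (hg : ∀ z, g z = (1 / Real.sqrt (2 * Real.pi * t)) * Real.exp (-z ^ 2 / (2 * t))) :
    Tendsto g atBot (nhds 0) := by
  rw [gauss_eq g hg]
  rw [show (0:ℝ) = (1 / Real.sqrt (2 * Real.pi * t)) * 0 by ring]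
  refine Tendsto.const_mul _ ?_
  refine Real.tendsto_exp_atBot.comp ?_
  have h0 : Tendsto (fun z : ℝ => z ^ 2 / (2 * t)) atBot atTop := by
    apply Tendsto.atTop_div_const (by positivity)
    have h1 : Tendsto (fun z : ℝ => (-z) ^ 2) atBot atTop :=
      (tendsto_pow_atTop (by norm_num : (2:ℕ) ≠ 0)).comp tendsto_neg_atBot_atTop
    simpa using h1
  have h2 := tendsto_neg_atBot_iff.mpr h0
  refine h2.congr (fun z => by ring)



lemma conv_hasDerivAt (ht : 0 < t) (g : ℝ → ℝ)
    (hg : ∀ z, g z = (1 / Real.sqrt (2 * Real.pi * t)) * Real.exp (-z ^ 2 / (2 * t)))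
    (φ : ℝ → ℝ) (hφ : ContDiff ℝ 1 φ) (Cb C' : ℝ)
    (hb : ∀ z, |φ z| ≤ Cb) (hb' : ∀ z, |deriv φ z| ≤ C') (x : ℝ) :
    HasDerivAt (fun x' => ∫ u : ℝ, φ (x' + u) * g u) (∫ u : ℝ, deriv φ (x + u) * g u) x := by
  have hgc := gauss_cont g hg
  have hgi := gauss_integrable ht g hg
  have hφc : Continuous φ := hφ.continuous
  have hφ'c : Continuous (deriv φ) := hφ.continuous_deriv le_rfl
  have key := hasDerivAt_integral_of_dominated_loc_of_deriv_le (μ := volume) (𝕜 := ℝ)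
    (F := fun x' u => φ (x' + u) * g u) (F' := fun x' u => deriv φ (x' + u) * g u)
    (x₀ := x) (bound := fun u => C' * |g u|) (s := Metric.ball x 1) (Metric.ball_mem_nhds x one_pos)
    (Filter.Eventually.of_forall fun x' =>
      ((hφc.comp (continuous_const.add continuous_id)).mul hgc).aestronglyMeasurable)
    (hgi.bdd_mul ((hφc.comp (continuous_const.add continuous_id)).aestronglyMeasurable)
      (c := Cb) (Filter.Eventually.of_forall fun u => by simpa using hb (x + u)))
    ((hφ'c.comp (continuous_const.add continuous_id)).mul hgc).aestronglyMeasurable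
    (Filter.Eventually.of_forall fun u x' _ => by
      rw [norm_mul, Real.norm_eq_abs, Real.norm_eq_abs]
      exact mul_le_mul_of_nonneg_right (hb' _) (abs_nonneg _))
    (hgi.abs.const_mul C')
    (Filter.Eventually.of_forall fun u x' _ => by
      have h1 : HasDerivAt (fun x'' : ℝ => x'' + u) 1 x' := by
        simpa using (hasDerivAt_id x').add_const u
      have h2 : HasDerivAt φ (deriv φ (x' + u)) (x' + u) :=
        (hφ.differentiable one_ne_zero (x' + u)).hasDerivAt
      have h3 := (h2.comp x' h1)
      simpa using h3.mul_const (g u))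
  exact key.2

end aux

/-- Gaussian integration-by-parts identity for the Brownian crossing probability
`pₜ(x,y) = exp(−2(y−L)(x−L)/t)`: the map `x ↦ ∫ f(x+w)(1 − pₜ(x,x+w)) gₜ(w) dw` is
differentiable with derivative `∫ f'(x+w)(1 + pₜ(x,x+w)) gₜ(w) dw`; in particular
`∫ f(x+w) ∂ₓ[pₜ(x,x+w)] gₜ(w) dw = −2 ∫ f'(x+w) pₜ(x,x+w) gₜ(w) dw`. -/
theorem stmt_19 (L t : ℝ) (ht : 0 < t)
    (g : ℝ → ℝ)
    (hg : ∀ z, g z = (1 / Real.sqrt (2 * Real.pi * t)) * Real.exp (-z ^ 2 / (2 * t)))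
    (p : ℝ → ℝ → ℝ)
    (hp : ∀ x y, p x y = Real.exp (-2 * (y - L) * (x - L) / t))
    (f : ℝ → ℝ) (hf : ContDiff ℝ 1 f)
    (hfb : ∃ C, ∀ z, |f z| ≤ C) (hf'b : ∃ C, ∀ z, |deriv f z| ≤ C)
    (x : ℝ) :
    HasDerivAt (fun x' => ∫ w : ℝ, f (x' + w) * (1 - p x' (x' + w)) * g w)
        (∫ w : ℝ, deriv f (x + w) * (1 + p x (x + w)) * g w) x
      ∧ (∫ w : ℝ, f (x + w) * deriv (fun x' => p x' (x' + w)) x * g w)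
        = -2 * ∫ w : ℝ, deriv f (x + w) * p x (x + w) * g w := by
  obtain ⟨Cb, hb⟩ := hfb
  obtain ⟨C', hb'⟩ := hf'b
  have hgc := gauss_cont g hg
  have hgi := gauss_integrable ht g hg
  have hfc : Continuous f := hf.continuous
  have hf'c : Continuous (deriv f) := hf.continuous_deriv le_rfl
  -- reflection identity
  have refl : ∀ x' w : ℝ, p x' (x' + w) * g w = g (w + 2 * (x' - L)) := by
    intro x' w
    have harg : -(w + 2 * (x' - L)) ^ 2 / (2 * t)
        = (-w ^ 2 / (2 * t)) + (-2 * ((x' + w) - L) * (x' - L) / t) := by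
      field_simp; ring
    rw [hp, hg w, hg (w + 2 * (x' - L)), harg, Real.exp_add]
    ring
  -- integrability of the basic pieces, for any bounded continuous ψ
  have hIb : ∀ (ψ : ℝ → ℝ), Continuous ψ → (∀ z, |ψ z| ≤ max Cb C') → ∀ x' : ℝ,
      Integrable (fun w : ℝ => ψ (x' + w) * g w) := by
    intro ψ hψ hψb x'
    exact hgi.bdd_mul ((hψ.comp (continuous_const.add continuous_id)).aestronglyMeasurable)
      (c := max Cb C') (Filter.Eventually.of_forall fun u => by simpa using hψb (x' + u))
  have hIb' : ∀ (ψ : ℝ → ℝ), Continuous ψ → (∀ z, |ψ z| ≤ max Cb C') → ∀ x' : ℝ,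
      Integrable (fun w : ℝ => ψ (x' + w) * g (w + 2 * (x' - L))) := by
    intro ψ hψ hψb x'
    exact (hgi.comp_add_right _).bdd_mul
      ((hψ.comp (continuous_const.add continuous_id)).aestronglyMeasurable)
      (c := max Cb C') (Filter.Eventually.of_forall fun u => by simpa using hψb (x' + u))
  have hbf : ∀ z, |f z| ≤ max Cb C' := fun z => (hb z).trans (le_max_left _ _)
  have hbf' : ∀ z, |deriv f z| ≤ max Cb C' := fun z => (hb' z).trans (le_max_right _ _)
  -- change of variables
  have hcv : ∀ (ψ : ℝ → ℝ) (x' : ℝ),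
      (∫ w : ℝ, ψ (x' + w) * g (w + 2 * (x' - L)))
        = ∫ u : ℝ, ψ (2 * L - x' + u) * g u := by
    intro ψ x'
    have := integral_add_right_eq_self (μ := volume)
      (fun u : ℝ => ψ (2 * L - x' + u) * g u) (2 * (x' - L))
    rw [← this]
    congr 1
    funext w
    congr 2
    ring
  -- decomposition of F
  have hF : ∀ x' : ℝ, (∫ w : ℝ, f (x' + w) * (1 - p x' (x' + w)) * g w)
      = (∫ u : ℝ, f (x' + u) * g u) - ∫ u : ℝ, f (2 * L - x' + u) * g u := by
    intro x'
    have h1 : (fun w : ℝ => f (x' + w) * (1 - p x' (x' + w)) * g w)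
        = fun w : ℝ => f (x' + w) * g w - f (x' + w) * g (w + 2 * (x' - L)) := by
      funext w
      rw [← refl x' w]
      ring
    rw [h1, integral_sub (hIb f hfc hbf x') (hIb' f hfc hbf x'), hcv f x']
  -- derivative of the two pieces
  have hA : HasDerivAt (fun x' => ∫ u : ℝ, f (x' + u) * g u)
      (∫ u : ℝ, deriv f (x + u) * g u) x :=
    conv_hasDerivAt ht g hg f hf Cb C' hb hb' x
  set φ2 : ℝ → ℝ := fun z => f (2 * L + z) with hφ2
  have hφ2c : ContDiff ℝ 1 φ2 := hf.comp (contDiff_const.add contDiff_id)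
  have hφ2d : ∀ z, deriv φ2 z = deriv f (2 * L + z) := fun z =>
    deriv_comp_const_add f (2 * L) z
  have hB0 : HasDerivAt (fun y => ∫ u : ℝ, φ2 (y + u) * g u)
      (∫ u : ℝ, deriv φ2 (-x + u) * g u) (-x) :=
    conv_hasDerivAt ht g hg φ2 hφ2c Cb C'
      (fun z => hb _) (fun z => by rw [hφ2d z]; exact hb' _) (-x)
  have hBneg : HasDerivAt (fun x' : ℝ => ∫ u : ℝ, φ2 (-x' + u) * g u)
      ((∫ u : ℝ, deriv φ2 (-x + u) * g u) * (-1)) x :=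
    hB0.comp x (hasDerivAt_neg x)
  have hBeq : (fun x' : ℝ => ∫ u : ℝ, φ2 (-x' + u) * g u)
      = fun x' : ℝ => ∫ u : ℝ, f (2 * L - x' + u) * g u := by
    funext x'
    congr 1
    funext u
    rw [hφ2]
    congr 2
    ring
  rw [hBeq] at hBneg
  have hAB : HasDerivAt
      (fun x' : ℝ => (∫ u : ℝ, f (x' + u) * g u) - ∫ u : ℝ, f (2 * L - x' + u) * g u)
      ((∫ u : ℝ, deriv f (x + u) * g u) + ∫ u : ℝ, deriv φ2 (-x + u) * g u) x := by
    have := hA.sub hBneg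
    convert this using 1
    · rfl
    · rfl
    · rfl
    ring
  -- identify the claimed derivative value
  have hval : (∫ w : ℝ, deriv f (x + w) * (1 + p x (x + w)) * g w)
      = (∫ u : ℝ, deriv f (x + u) * g u) + ∫ u : ℝ, deriv φ2 (-x + u) * g u := by
    have h1 : (fun w : ℝ => deriv f (x + w) * (1 + p x (x + w)) * g w)
        = fun w : ℝ => deriv f (x + w) * g w + deriv f (x + w) * g (w + 2 * (x - L)) := by
      funext w
      rw [← refl x w]
      ring
    rw [h1, integral_add (hIb _ hf'c hbf' x) (hIb' _ hf'c hbf' x), hcv (deriv f) x]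
    congr 1
    congr 1
    funext u
    rw [hφ2d]
    congr 2
    ring
  have part1 : HasDerivAt (fun x' => ∫ w : ℝ, f (x' + w) * (1 - p x' (x' + w)) * g w)
      (∫ w : ℝ, deriv f (x + w) * (1 + p x (x + w)) * g w) x := by
    rw [hval, funext hF]
    exact hAB
  refine ⟨part1, ?_⟩
  -- Part 2
  set c : ℝ := 2 * (x - L) with hc
  -- derivative of x' ↦ p x' (x' + w)
  have hD : ∀ w : ℝ, deriv (fun x' => p x' (x' + w)) x
      = p x (x + w) * (-2 * (w + c) / t) := by
    intro w
    have hpe : (fun x' => p x' (x' + w)) = fun x' =>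
        Real.exp (-2 * ((x' + w) - L) * (x' - L) / t) := by
      funext x'
      rw [hp]
    have h1 : HasDerivAt (fun x' : ℝ => x' + w - L) 1 x := by
      simpa using ((hasDerivAt_id x).add_const w).sub_const L
    have h2 : HasDerivAt (fun x' : ℝ => x' - L) 1 x := (hasDerivAt_id x).sub_const L
    have h3 := ((h1.mul h2).const_mul (-2)).div_const t
    have h4 := h3.exp
    simp only [Pi.mul_apply] at h4
    have h5 : HasDerivAt (fun x' => Real.exp (-2 * ((x' + w) - L) * (x' - L) / t))
        (Real.exp (-2 * ((x + w) - L) * (x - L) / t)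
          * (-2 * (1 * (x - L) + (x + w - L) * 1) / t)) x := by
      convert h4 using 2 <;> ring
    rw [hpe, h5.deriv, ← hp x (x + w), hc]
    ring
  -- LHS of part 2 after substitution
  have hL2 : (∫ w : ℝ, f (x + w) * deriv (fun x' => p x' (x' + w)) x * g w)
      = ∫ u : ℝ, f (2 * L - x + u) * (-2 * u / t * g u) := by
    have h1 : (fun w : ℝ => f (x + w) * deriv (fun x' => p x' (x' + w)) x * g w)
        = fun w : ℝ => f (2 * L - x + (w + c)) * (-2 * (w + c) / t * g (w + c)) := by
      funext w
      rw [hD w]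
      have : p x (x + w) * g w = g (w + c) := refl x w
      have harg : (2 * L - x + (w + c)) = x + w := by rw [hc]; ring
      rw [harg, ← this]
      ring
    rw [h1]
    exact integral_add_right_eq_self (μ := volume)
      (fun u : ℝ => f (2 * L - x + u) * (-2 * u / t * g u)) c
  -- RHS of part 2 after substitution
  have hR2 : (∫ w : ℝ, deriv f (x + w) * p x (x + w) * g w)
      = ∫ u : ℝ, deriv f (2 * L - x + u) * g u := by
    have h1 : (fun w : ℝ => deriv f (x + w) * p x (x + w) * g w)
        = fun w : ℝ => deriv f (x + w) * g (w + c) := by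
      funext w
      rw [mul_assoc, refl x w, hc]
    rw [h1]
    exact hcv (deriv f) x
  rw [hL2, hR2]
  -- Gaussian integration by parts
  set h : ℝ → ℝ := fun u => f (2 * L - x + u) with hh
  have hhc : ContDiff ℝ 1 h := hf.comp (contDiff_const.add contDiff_id)
  have hhd : ∀ u, HasDerivAt h (deriv f (2 * L - x + u)) u := by
    intro u
    have h1 : HasDerivAt (fun u : ℝ => 2 * L - x + u) 1 u := by
      simpa using (hasDerivAt_id u).const_add (2 * L - x)
    have h2 : HasDerivAt f (deriv f (2 * L - x + u)) (2 * L - x + u) :=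
      (hf.differentiable one_ne_zero _).hasDerivAt
    have := h2.comp u h1
    rw [mul_one] at this
    exact this
  set H : ℝ → ℝ := fun u => h u * g u with hH
  have hHd : ∀ u, HasDerivAt H
      (deriv f (2 * L - x + u) * g u + h u * (-(u / t) * g u)) u := by
    intro u
    exact (hhd u).mul (gauss_hasDerivAt ht g hg u)
  have I3 : Integrable (fun u : ℝ => deriv f (2 * L - x + u) * g u) := by
    have := hIb (deriv f) hf'c hbf' (2 * L - x)
    exact this
  have Ig' : Integrable (fun u : ℝ => -(u / t) * g u) := by
    have := (gauss_moment ht g hg).const_mul (-(1 / t))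
    refine this.congr (Filter.Eventually.of_forall fun u => by ring)
  have I4 : Integrable (fun u : ℝ => h u * (-(u / t) * g u)) := by
    refine Ig'.bdd_mul ((hfc.comp (continuous_const.add continuous_id)).aestronglyMeasurable)
      (c := Cb) (Filter.Eventually.of_forall fun u => by simpa using hb (2 * L - x + u))
  have Iall : Integrable
      (fun u : ℝ => deriv f (2 * L - x + u) * g u + h u * (-(u / t) * g u)) := I3.add I4
  -- limits of H at ±∞
  have hHbound : ∀ u, ‖H u‖ ≤ Cb * g u := by
    intro u
    rw [hH]
    simp only [Real.norm_eq_abs, abs_mul]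
    rw [abs_of_nonneg (gauss_nonneg g hg u)]
    exact mul_le_mul_of_nonneg_right (hb _) (gauss_nonneg g hg u)
  have hHtop : Filter.Tendsto H Filter.atTop (nhds 0) := by
    refine squeeze_zero_norm hHbound ?_
    simpa using (gauss_tendsto_top ht g hg).const_mul Cb
  have hHbot : Filter.Tendsto H Filter.atBot (nhds 0) := by
    refine squeeze_zero_norm hHbound ?_
    simpa using (gauss_tendsto_bot ht g hg).const_mul Cb
  have hIic : ∫ u in Set.Iic (0:ℝ),
      (deriv f (2 * L - x + u) * g u + h u * (-(u / t) * g u)) = H 0 - 0 :=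
    integral_Iic_of_hasDerivAt_of_tendsto' (fun u _ => hHd u) Iall.integrableOn hHbot
  have hIoi : ∫ u in Set.Ioi (0:ℝ),
      (deriv f (2 * L - x + u) * g u + h u * (-(u / t) * g u)) = 0 - H 0 :=
    integral_Ioi_of_hasDerivAt_of_tendsto' (fun u _ => hHd u) Iall.integrableOn hHtop
  have hzero : (∫ u : ℝ, (deriv f (2 * L - x + u) * g u + h u * (-(u / t) * g u))) = 0 := by
    rw [← intervalIntegral.integral_Iic_add_Ioi (b := (0:ℝ)) Iall.integrableOn Iall.integrableOn,
      hIic, hIoi]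
    ring
  rw [integral_add I3 I4] at hzero
  have hfin : (∫ u : ℝ, f (2 * L - x + u) * (-2 * u / t * g u))
      = 2 * ∫ u : ℝ, h u * (-(u / t) * g u) := by
    rw [← integral_const_mul]
    congr 1
    funext u
    rw [hh]
    ring
  rw [hfin]
  linarith [hzero]
end
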